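/- arXiv:2411.16525 — 7 statements merged into one kernel-verified Lean document; each statement's English description precedes it below -/
import Mathlib

section
/- Let n ≥ 2, z ∈ ℝ^n, p = softmax(z), and i ∈ {1,…,n}. If max_{j∈[n]} z_j − z_i > ln n + 1, then the partial derivative of Boltz at z in the i-th coordinate (i.e. the derivative at t = z_i of t ↦ Boltz(z_1,…,z_{i−1}, t, z_{i+1},…,z_n)) equals p_i(1 + ln p_i + S(p)) and is strictly negative. -/
/-- The softmax of a vector `z ∈ ℝⁿ`: `softmax(z)_i = exp(z_i) / ∑_j exp(z_j)`. -/
noncomputable def softmaxVec {n : ℕ} (z : Fin n → ℝ) : Fin n → ℝ :=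
  fun i => Real.exp (z i) / ∑ j, Real.exp (z j)

/-- The Boltzmann operator `Boltz(z) = ∑_i z_i · softmax(z)_i`. -/
noncomputable def boltz {n : ℕ} (z : Fin n → ℝ) : ℝ :=
  ∑ i, z i * softmaxVec z i

/-- The (Gibbs) entropy `S(p) = −∑_i p_i ln p_i`. -/
noncomputable def entropy {n : ℕ} (p : Fin n → ℝ) : ℝ :=
  -∑ i, p i * Real.log (p i)

/-- if `max_j z_j − z_i > ln n + 1`, then the partial derivative of `Boltz`
at `z` in the `i`-th coordinate equals `p_i (1 + ln p_i + S(p))` and is strictly negative. -/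
theorem hasDerivAt_boltz_update_of_max_sub_gt {n : ℕ} (hn : 2 ≤ n) (z : Fin n → ℝ) (i : Fin n)
    (hmax : ∃ j, (∀ k, z k ≤ z j) ∧ z j - z i > Real.log n + 1) :
    HasDerivAt (fun t => boltz (Function.update z i t))
        (softmaxVec z i * (1 + Real.log (softmaxVec z i) + entropy (softmaxVec z))) (z i) ∧
      softmaxVec z i * (1 + Real.log (softmaxVec z i) + entropy (softmaxVec z)) < 0 := by
  have hn0 : (0:ℝ) < n := by positivity
  set E : ℝ := ∑ j, Real.exp (z j) with hEdef
  have hEpos : 0 < E := Finset.sum_pos (fun j _ => Real.exp_pos _) ⟨i, Finset.mem_univ i⟩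
  have hp : ∀ j, softmaxVec z j = Real.exp (z j) / E := fun j => rfl
  have hppos : ∀ j, 0 < softmaxVec z j := fun j => div_pos (Real.exp_pos _) hEpos
  have hpsum : ∑ j, softmaxVec z j = 1 := by
    simp only [softmaxVec]
    rw [← Finset.sum_div, ← hEdef, div_self hEpos.ne']
  have hlogp : ∀ j, Real.log (softmaxVec z j) = z j - Real.log E := by
    intro j
    rw [hp, Real.log_div (Real.exp_pos _).ne' hEpos.ne', Real.log_exp]
  have hent : entropy (softmaxVec z) = Real.log E - boltz z := by
    unfold entropy boltz
    have : ∀ j ∈ Finset.univ, softmaxVec z j * Real.log (softmaxVec z j)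
        = z j * softmaxVec z j - Real.log E * softmaxVec z j := by
      intro j _; rw [hlogp j]; ring
    rw [Finset.sum_congr rfl this, Finset.sum_sub_distrib, ← Finset.mul_sum, hpsum]
    ring
  set A : ℝ := ∑ j ∈ Finset.univ.erase i, z j * Real.exp (z j) with hAdef
  set B : ℝ := ∑ j ∈ Finset.univ.erase i, Real.exp (z j) with hBdef
  have hsplit : ∀ (g : Fin n → ℝ), ∑ j, g j = g i + ∑ j ∈ Finset.univ.erase i, g j :=
    fun g => (Finset.add_sum_erase _ g (Finset.mem_univ i)).symm
  have hfun : ∀ t, boltz (Function.update z i t)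
      = (t * Real.exp t + A) / (Real.exp t + B) := by
    intro t
    have hupd : ∀ j ∈ Finset.univ.erase i, Function.update z i t j = z j := by
      intro j hj
      exact Function.update_of_ne (Finset.ne_of_mem_erase hj) _ _
    have hD : ∑ k, Real.exp (Function.update z i t k) = Real.exp t + B := by
      rw [hsplit (fun k => Real.exp (Function.update z i t k))]
      simp only [Function.update_self]
      congr 1
      exact Finset.sum_congr rfl fun j hj => by rw [hupd j hj]
    unfold boltz softmaxVec
    rw [hD]
    rw [show ∀ (f : Fin n → ℝ) (c : ℝ), (∑ j, f j * (Real.exp (f j) / c))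
        = (∑ j, f j * Real.exp (f j)) / c from fun f c => by
      rw [Finset.sum_div]; exact Finset.sum_congr rfl fun j _ => (mul_div_assoc _ _ _).symm]
    congr 1
    rw [hsplit (fun j => Function.update z i t j * Real.exp (Function.update z i t j))]
    simp only [Function.update_self]
    congr 1
    exact Finset.sum_congr rfl fun j hj => by rw [hupd j hj]
  have hE_split : E = Real.exp (z i) + B := by
    rw [hEdef, hsplit (fun j => Real.exp (z j))]
  have hboltz : boltz z = (z i * Real.exp (z i) + A) / E := by
    have := hfun (z i)
    rwa [Function.update_eq_self, ← hE_split] at this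
  -- the target value, rewritten
  have hT : softmaxVec z i * (1 + Real.log (softmaxVec z i) + entropy (softmaxVec z))
      = softmaxVec z i * (1 + z i - boltz z) := by
    rw [hlogp i, hent]; ring
  -- derivative
  set c := z i with hc
  have hden : HasDerivAt (fun t : ℝ => Real.exp t + B) (Real.exp c) c :=
    (Real.hasDerivAt_exp c).add_const B
  have hnum : HasDerivAt (fun t : ℝ => t * Real.exp t + A)
      (1 * Real.exp c + c * Real.exp c) c :=
    ((hasDerivAt_id c).mul (Real.hasDerivAt_exp c)).add_const A
  have hEc : Real.exp c + B = E := hE_split.symm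
  have hdenne : Real.exp c + B ≠ 0 := by rw [hEc]; exact hEpos.ne'
  have hdiv := hnum.div hden hdenne
  have hderiv : HasDerivAt (fun t => boltz (Function.update z i t))
      (softmaxVec z i * (1 + Real.log (softmaxVec z i) + entropy (softmaxVec z))) (z i) := by
    rw [show (fun t => boltz (Function.update z i t))
        = fun t => (t * Real.exp t + A) / (Real.exp t + B) from funext hfun]
    refine hdiv.congr_deriv ?_
    rw [hT, hp, hboltz, hEc]
    field_simp
    ring
  refine ⟨hderiv, ?_⟩
  -- negativity
  rw [hT]
  obtain ⟨j, hj_max, hj_gt⟩ := hmax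
  have hS : entropy (softmaxVec z) ≤ Real.log n := by
    have key : ∀ k ∈ Finset.univ, -(softmaxVec z k * Real.log (softmaxVec z k))
        - softmaxVec z k * Real.log n ≤ 1 / n - softmaxVec z k := by
      intro k _
      set q := softmaxVec z k with hq
      have hqpos : 0 < q := hppos k
      have hlog : Real.log (1 / (n * q)) ≤ 1 / (n * q) - 1 :=
        Real.log_le_sub_one_of_pos (by positivity)
      have hlogeq : Real.log (1 / (n * q)) = -(Real.log n + Real.log q) := by
        rw [one_div, Real.log_inv, Real.log_mul hn0.ne' hqpos.ne']
      have := mul_le_mul_of_nonneg_left hlog hqpos.le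
      rw [hlogeq] at this
      have hqq : q * (1 / (n * q) - 1) = 1 / n - q := by
        field_simp
      rw [hqq] at this
      nlinarith
    have hsum := Finset.sum_le_sum key
    have e1 : ∑ x : Fin n, -(softmaxVec z x * Real.log (softmaxVec z x))
        = entropy (softmaxVec z) := by
      unfold entropy
      simp
    have e2 : ∑ x : Fin n, softmaxVec z x * Real.log n = Real.log n := by
      rw [← Finset.sum_mul, hpsum, one_mul]
    have e3 : ∑ k : Fin n, (1 / (n:ℝ) - softmaxVec z k) = 0 := by
      rw [Finset.sum_sub_distrib, hpsum, Finset.sum_const, Finset.card_univ,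
        Fintype.card_fin, nsmul_eq_mul]
      field_simp
      norm_num
    rw [Finset.sum_sub_distrib, e1, e2, e3] at hsum
    linarith
  have hlogE : z j ≤ Real.log E := by
    rw [Real.le_log_iff_exp_le hEpos]
    exact Finset.single_le_sum (fun k _ => (Real.exp_pos (z k)).le) (Finset.mem_univ j)
  have hboltz_gt : boltz z > z i + 1 := by
    have : boltz z = Real.log E - entropy (softmaxVec z) := by rw [hent]; ring
    rw [this]
    linarith
  exact mul_neg_of_pos_of_neg (hppos i) (by linarith)
end

section
/- Let n ≥ 2, z ∈ ℝ^n, and i ∈ {1,…,n}. If max_{j∈[n]} z_j − z_i > ln n + 3, then the second partial derivative of Boltz at z in the i-th coordinate (i.e. the second derivative at t = z_i of t ↦ Boltz(z_1,…,z_{i−1}, t, z_{i+1},…,z_n)) is strictly negative; in other words, Boltz is strictly concave in the direction of z_i at z. -/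
/-- Pointwise lemma: `(s - c) * exp s ≥ -exp (c - 1)`. -/
lemma aux_point (s c : ℝ) : -(Real.exp (c - 1)) ≤ (s - c) * Real.exp s := by
  rcases le_or_gt c s with h | h
  · have : 0 ≤ (s - c) * Real.exp s := mul_nonneg (by linarith) (Real.exp_pos s).le
    nlinarith [Real.exp_pos (c - 1)]
  · have h1 : (c - 1 - s) + 1 ≤ Real.exp (c - 1 - s) := Real.add_one_le_exp _
    have h2 : (c - s) * Real.exp s ≤ Real.exp (c - 1 - s) * Real.exp s := by
      apply mul_le_mul_of_nonneg_right (by linarith) (Real.exp_pos s).le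
    rw [← Real.exp_add] at h2
    have : c - 1 - s + s = c - 1 := by ring
    rw [this] at h2
    nlinarith

set_option maxHeartbeats 1000000 in
/-- if `max_j z_j − z_i > ln n + 3`, then the second partial derivative of
`Boltz` at `z` in the `i`-th coordinate is strictly negative. -/
theorem deriv2_boltz_update_neg_of_max_sub_gt {n : ℕ} (hn : 2 ≤ n) (z : Fin n → ℝ) (i : Fin n)
    (hmax : ∃ j, (∀ k, z k ≤ z j) ∧ z j - z i > Real.log n + 3) :
    deriv (deriv (fun t => boltz (Function.update z i t))) (z i) < 0 := by
  obtain ⟨j, hj, hji⟩ := hmax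
  have hn1 : (1:ℝ) ≤ (n:ℝ) := by exact_mod_cast Nat.one_le_of_lt hn
  have hnpos : (0:ℝ) < (n:ℝ) := by linarith
  have hlogn : (0:ℝ) ≤ Real.log n := Real.log_nonneg hn1
  have hji' : z i < z j := by linarith
  have hjne : j ≠ i := fun h => by rw [h] at hji'; exact lt_irrefl _ hji'
  set C := ∑ k ∈ Finset.univ.erase i, Real.exp (z k) with hCdef
  set A := ∑ k ∈ Finset.univ.erase i, z k * Real.exp (z k) with hAdef
  -- numeric facts about exp
  have he1 : (2.7182818283:ℝ) < Real.exp 1 := by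
    have := Real.exp_one_gt_d9; linarith
  have he1' : Real.exp 1 < 2.7182818286 := Real.exp_one_lt_d9
  have hexp3 : (20:ℝ) < Real.exp 3 := by
    have h3 : Real.exp 3 = Real.exp 1 ^ (3:ℕ) := by
      rw [← Real.exp_nat_mul]; norm_num
    rw [h3]; nlinarith [he1, sq_nonneg (Real.exp 1)]
  have hexp54 : Real.exp (5/4 : ℝ) < 8 := by
    have h2 : Real.exp 2 = Real.exp 1 ^ (2:ℕ) := by
      rw [← Real.exp_nat_mul]; norm_num
    have : Real.exp (5/4 : ℝ) < Real.exp 2 := Real.exp_lt_exp.2 (by norm_num)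
    nlinarith
  -- exp (z j) is big
  have hzj : Real.exp (z i) * ((n:ℝ) * Real.exp 3) < Real.exp (z j) := by
    have : z i + (Real.log n + 3) < z j := by linarith
    have h := Real.exp_lt_exp.2 this
    rw [Real.exp_add, Real.exp_add, Real.exp_log hnpos] at h
    calc Real.exp (z i) * ((n:ℝ) * Real.exp 3)
        = Real.exp (z i) * ((n:ℝ) * Real.exp 3) := rfl
      _ < Real.exp (z j) := by nlinarith [Real.exp_pos (z i)]
  have hjC : Real.exp (z j) ≤ C := by
    apply Finset.single_le_sum (f := fun k => Real.exp (z k))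
      (fun k _ => (Real.exp_pos (z k)).le)
    exact Finset.mem_erase.2 ⟨hjne, Finset.mem_univ j⟩
  have hCpos : 0 < C := lt_of_lt_of_le (Real.exp_pos (z j)) hjC
  have hn2 : (2:ℝ) ≤ (n:ℝ) := by exact_mod_cast hn
  have h40 : 40 * Real.exp (z i) < C := by
    have h1 : (40:ℝ) ≤ (n:ℝ) * Real.exp 3 := by nlinarith
    have h2 : Real.exp (z i) * 40 ≤ Real.exp (z i) * ((n:ℝ) * Real.exp 3) :=
      mul_le_mul_of_nonneg_left h1 (Real.exp_pos (z i)).le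
    linarith
  -- sum splitting
  have hS : ∑ k, Real.exp (z k) = Real.exp (z i) + C :=
    (Finset.add_sum_erase Finset.univ (fun k => Real.exp (z k)) (Finset.mem_univ i)).symm
  have hT : ∑ k, z k * Real.exp (z k) = z i * Real.exp (z i) + A :=
    (Finset.add_sum_erase Finset.univ (fun k => z k * Real.exp (z k)) (Finset.mem_univ i)).symm
  -- key inequality h4
  have hkey : (z i + 9/4) * (Real.exp (z i) + C) < z i * Real.exp (z i) + A := by
    rw [← hS, ← hT]
    have hpos : 0 < ∑ k, (z k - (z i + 9/4)) * Real.exp (z k) := by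
      rw [← Finset.add_sum_erase Finset.univ (fun k => (z k - (z i + 9/4)) * Real.exp (z k)) (Finset.mem_univ j)]
      have hb : ((Finset.univ.erase j).card : ℝ) * (-(Real.exp (z i + 5/4))) ≤
          ∑ k ∈ Finset.univ.erase j, (z k - (z i + 9/4)) * Real.exp (z k) := by
        have := Finset.card_nsmul_le_sum (Finset.univ.erase j)
          (fun k => (z k - (z i + 9/4)) * Real.exp (z k)) (-(Real.exp (z i + 5/4)))
          (fun k _ => by
            have := aux_point (z k) (z i + 9/4)
            have heq : z i + 9/4 - 1 = z i + 5/4 := by ring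
            rw [heq] at this; linarith)
        simpa [nsmul_eq_mul] using this
      have hcard : ((Finset.univ.erase j).card : ℝ) = (n:ℝ) - 1 := by
        rw [Finset.card_erase_of_mem (Finset.mem_univ j)]
        simp
        have : 1 ≤ n := Nat.one_le_of_lt hn
        push_cast [Nat.cast_sub this]
        ring
      rw [hcard] at hb
      have hmain : ((n:ℝ) - 1) * Real.exp (z i + 5/4) <
          (z j - (z i + 9/4)) * Real.exp (z j) := by
        have hc : (3/4 : ℝ) < z j - (z i + 9/4) := by linarith
        have hexpzj : (n:ℝ) * (20 * Real.exp (z i)) < Real.exp (z j) := by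
          nlinarith [Real.exp_pos (z i),
            mul_pos (mul_pos hnpos (Real.exp_pos (z i))) (sub_pos.2 hexp3)]
        have h54 : Real.exp (z i + 5/4) < 8 * Real.exp (z i) := by
          rw [Real.exp_add]; nlinarith [Real.exp_pos (z i)]
        nlinarith [Real.exp_pos (z i), Real.exp_pos (z j), mul_pos hnpos (Real.exp_pos (z i))]
      linarith
    have hexpand : ∑ k, (z k - (z i + 9/4)) * Real.exp (z k)
        = (∑ k, z k * Real.exp (z k)) - (z i + 9/4) * ∑ k, Real.exp (z k) := by
      rw [Finset.mul_sum, ← Finset.sum_sub_distrib]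
      apply Finset.sum_congr rfl
      intro k _; ring
    rw [hexpand] at hpos
    linarith
  -- function equality
  have hupd : ∀ t : ℝ, ∀ k ∈ Finset.univ.erase i, Function.update z i t k = z k := by
    intro t k hk
    exact Function.update_of_ne (Finset.ne_of_mem_erase hk) _ _
  have hfun : (fun t => boltz (Function.update z i t))
      = fun t => (t * Real.exp t + A) / (Real.exp t + C) := by
    funext t
    have hden : ∑ k, Real.exp (Function.update z i t k) = Real.exp t + C := by
      rw [← Finset.add_sum_erase Finset.univ (fun k => Real.exp (Function.update z i t k)) (Finset.mem_univ i), Function.update_self]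
      congr 1
      exact Finset.sum_congr rfl fun k hk => by rw [hupd t k hk]
    have hnum : ∑ k, Function.update z i t k * Real.exp (Function.update z i t k)
        = t * Real.exp t + A := by
      rw [← Finset.add_sum_erase Finset.univ (fun k => Function.update z i t k * Real.exp (Function.update z i t k)) (Finset.mem_univ i), Function.update_self]
      congr 1
      exact Finset.sum_congr rfl fun k hk => by rw [hupd t k hk]
    simp only [boltz, softmaxVec, hden, ← mul_div_assoc]
    rw [← Finset.sum_div, hnum]
  -- first derivative
  have hDpos : ∀ t : ℝ, 0 < Real.exp t + C := fun t => by positivity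
  have hd1 : ∀ t : ℝ, HasDerivAt (fun t => (t * Real.exp t + A) / (Real.exp t + C))
      (((1 * Real.exp t + t * Real.exp t) * (Real.exp t + C)
        - (t * Real.exp t + A) * Real.exp t) / (Real.exp t + C) ^ 2) t := by
    intro t
    have hN : HasDerivAt (fun t => t * Real.exp t + A) (1 * Real.exp t + t * Real.exp t) t :=
      ((hasDerivAt_id t).mul (Real.hasDerivAt_exp t)).add_const A
    have hD : HasDerivAt (fun t => Real.exp t + C) (Real.exp t) t :=
      (Real.hasDerivAt_exp t).add_const C
    exact hN.div hD (hDpos t).ne'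
  have hderiv1 : deriv (fun t => boltz (Function.update z i t))
      = fun t => ((1 * Real.exp t + t * Real.exp t) * (Real.exp t + C)
        - (t * Real.exp t + A) * Real.exp t) / (Real.exp t + C) ^ 2 := by
    funext t
    rw [hfun]
    exact (hd1 t).deriv
  rw [hderiv1]
  -- second derivative at z i
  set t := z i
  have hN2 : HasDerivAt (fun t => (1 * Real.exp t + t * Real.exp t) * (Real.exp t + C)
        - (t * Real.exp t + A) * Real.exp t)
      (((1 * Real.exp t + (1 * Real.exp t + t * Real.exp t)) * (Real.exp t + C)
          + (1 * Real.exp t + t * Real.exp t) * Real.exp t)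
        - ((1 * Real.exp t + t * Real.exp t) * Real.exp t
          + (t * Real.exp t + A) * Real.exp t)) t := by
    have h1 : HasDerivAt (fun t => 1 * Real.exp t + t * Real.exp t)
        (1 * Real.exp t + (1 * Real.exp t + t * Real.exp t)) t :=
      ((Real.hasDerivAt_exp t).const_mul 1).add ((hasDerivAt_id t).mul (Real.hasDerivAt_exp t))
    have h2 : HasDerivAt (fun t => Real.exp t + C) (Real.exp t) t :=
      (Real.hasDerivAt_exp t).add_const C
    have h3 : HasDerivAt (fun t => t * Real.exp t + A) (1 * Real.exp t + t * Real.exp t) t :=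
      ((hasDerivAt_id t).mul (Real.hasDerivAt_exp t)).add_const A
    exact (h1.mul h2).sub (h3.mul (Real.hasDerivAt_exp t))
  have hD2 : HasDerivAt (fun t => (Real.exp t + C) ^ 2)
      ((2 : ℕ) * (Real.exp t + C) ^ 1 * Real.exp t) t := by
    have h2 : HasDerivAt (fun t => Real.exp t + C) (Real.exp t) t :=
      (Real.hasDerivAt_exp t).add_const C
    exact h2.pow 2
  have hd2 := hN2.div hD2 (pow_ne_zero 2 (hDpos t).ne')
  rw [(show HasDerivAt (fun t => ((1 * Real.exp t + t * Real.exp t) * (Real.exp t + C) - (t * Real.exp t + A) * Real.exp t) / (Real.exp t + C) ^ 2) _ t from hd2).deriv]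
  -- final inequality
  set x := Real.exp t with hxdef
  have hxpos : 0 < x := Real.exp_pos t
  set d := x + C with hddef
  have hdpos : 0 < d := by positivity
  apply div_neg_of_neg_of_pos
  · have hring : ((1 * x + (1 * x + t * x)) * (x + C) + (1 * x + t * x) * x
          - ((1 * x + t * x) * x + (t * x + A) * x)) * ((x + C) ^ 2)
        - ((1 * x + t * x) * (x + C) - (t * x + A) * x) * ((2:ℕ) * (x + C) ^ 1 * x)
        = x * d * (((1 + t) * d - (t * x + A)) * (d - 2 * x) + d ^ 2) := by
      rw [hddef]; push_cast; ring
    rw [hring]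
    apply mul_neg_of_pos_of_neg (by positivity)
    have h5 : 0 < (t * x + A) - (t + 9/4) * d := by linarith [hkey]
    have h6 : 0 < d - 2 * x := by
      have : 40 * x < d := by rw [hddef]; linarith
      linarith
    have h40' : 0 < d - 40 * x := by
      have : 40 * x < d := by rw [hddef]; linarith
      linarith
    clear hring
    clear_value d x t A C
    linarith [mul_pos h5 h6, mul_pos hdpos h40', mul_pos hxpos hdpos]
  · positivity
end

section
/- Let n ≥ 2 and δ > ln n + 1. Let z ∈ ℝ^n satisfy z_i − z_j > δ for all 1 ≤ i < j ≤ n (so the entries are strictly decreasing with gaps greater than δ). Then Boltz(z) > Boltz(z′), where z′ = (z_1, z_1 − δ, z_1 − δ, …, z_1 − δ) ∈ ℝ^n. -/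
lemma exp_sum_pos {n : ℕ} [NeZero n] (v : Fin n → ℝ) : 0 < ∑ j, Real.exp (v j) :=
  Finset.sum_pos (fun _ _ => Real.exp_pos _) Finset.univ_nonempty

lemma boltz_eq {n : ℕ} (v : Fin n → ℝ) :
    boltz v = (∑ i, v i * Real.exp (v i)) / (∑ j, Real.exp (v j)) := by
  unfold boltz softmaxVec
  rw [Finset.sum_div]
  exact Finset.sum_congr rfl (fun i _ => by rw [mul_div_assoc])

lemma boltz_shift {n : ℕ} [NeZero n] (v : Fin n → ℝ) (c : ℝ) :
    boltz (fun i => v i + c) = boltz v + c := by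
  have hE := exp_sum_pos v
  have hsm : softmaxVec (fun i => v i + c) = softmaxVec v := by
    funext i
    unfold softmaxVec
    simp only [Real.exp_add]
    rw [← Finset.sum_mul, mul_div_mul_right _ _ (ne_of_gt (Real.exp_pos c))]
  have hsum1 : ∑ i, softmaxVec v i = 1 := by
    unfold softmaxVec
    rw [← Finset.sum_div]
    exact div_self (ne_of_gt hE)
  unfold boltz
  rw [hsm]
  simp only [add_mul]
  rw [Finset.sum_add_distrib, ← Finset.mul_sum, hsum1, mul_one]

lemma key (δ c d : ℝ) (hc : 0 ≤ c) (hδc : 1 + c < δ) (hd : δ < d) :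
    d * Real.exp (-d) * (1 + c) < δ * Real.exp (-δ) + δ * c * Real.exp (-d) := by
  have hu : 0 < d - δ := by linarith
  have e1 : Real.exp (-d) = Real.exp (-δ) * Real.exp (-(d - δ)) := by
    rw [← Real.exp_add]; ring_nf
  set u := d - δ with hu_def
  have hpδ := Real.exp_pos (-δ)
  have hpu := Real.exp_pos (-u)
  have h2 : (u + 1) * Real.exp (-u) ≤ 1 := by
    have h := Real.add_one_le_exp u
    calc (u + 1) * Real.exp (-u) ≤ Real.exp u * Real.exp (-u) := by nlinarith
    _ = 1 := by rw [← Real.exp_add]; simp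
  have h3 : u * Real.exp (-u) ≤ 1 - Real.exp (-u) := by nlinarith
  have h4 : 0 < u * Real.exp (-u) := mul_pos hu hpu
  have hδpos : (0:ℝ) < δ := by linarith
  have inner : d * Real.exp (-u) * (1 + c) < δ + δ * c * Real.exp (-u) := by
    have hdu : d = δ + u := by rw [hu_def]; ring
    rw [hdu]
    nlinarith [mul_pos (show (0:ℝ) < δ - (1 + c) by linarith) h4,
      mul_le_mul_of_nonneg_left h3 (le_of_lt hδpos)]
  calc d * Real.exp (-d) * (1 + c) = Real.exp (-δ) * (d * Real.exp (-u) * (1 + c)) := by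
        rw [e1]; ring
    _ < Real.exp (-δ) * (δ + δ * c * Real.exp (-u)) := (mul_lt_mul_iff_right₀ hpδ).mpr inner
    _ = δ * Real.exp (-δ) + δ * c * Real.exp (-d) := by rw [e1]; ring


/-- if the entries of `z` are strictly decreasing with gaps greater than
`δ > ln n + 1`, then `Boltz(z) > Boltz(z₁, z₁ − δ, …, z₁ − δ)`. -/
theorem boltz_gt_boltz_flat {n : ℕ} (hn : 2 ≤ n) (δ : ℝ) (hδ : δ > Real.log n + 1)
    (z : Fin n → ℝ) (hsep : ∀ i j : Fin n, i < j → z i - z j > δ) :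
    boltz z >
      boltz (fun k : Fin n =>
        if k = ⟨0, by omega⟩ then z ⟨0, by omega⟩ else z ⟨0, by omega⟩ - δ) := by
  haveI : NeZero n := ⟨by omega⟩
  have h2n : (2:ℝ) ≤ (n:ℝ) := by exact_mod_cast hn
  have hnpos : (0:ℝ) < (n:ℝ) := by linarith
  have hxpos : (0:ℝ) < Real.exp (-δ) := Real.exp_pos _
  have hc0 : (0:ℝ) ≤ ((n:ℝ) - 1) * Real.exp (-δ) := mul_nonneg (by linarith) hxpos.le
  -- the bound 1 + (n-1)e^{-δ} < δ
  have hcδ : 1 + ((n:ℝ) - 1) * Real.exp (-δ) < δ := by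
    have h1 : Real.exp (-δ) < Real.exp (-(Real.log n + 1)) := Real.exp_lt_exp.mpr (by linarith)
    have h2 : Real.exp (-(Real.log n + 1)) = Real.exp (-1) / n := by
      rw [neg_add, Real.exp_add, Real.exp_neg (Real.log n), Real.exp_log hnpos]; ring
    have hmul : Real.exp (-1) * Real.exp 1 = 1 := by rw [← Real.exp_add]; simp
    have hE1 : Real.exp (-1) < 0.38 := by
      nlinarith [Real.exp_one_gt_d9, Real.exp_pos (-1)]
    have hnx : Real.exp (-δ) * (n:ℝ) < Real.exp (-1) := by
      rw [h2] at h1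
      exact (lt_div_iff₀ hnpos).mp h1
    have hlog2 : (0.6931:ℝ) < Real.log 2 := by
      have := Real.log_two_gt_d9; linarith
    have hlogn : Real.log 2 ≤ Real.log n := Real.log_le_log (by norm_num) h2n
    have hceq : ((n:ℝ) - 1) * Real.exp (-δ) = Real.exp (-δ) * (n:ℝ) - Real.exp (-δ) := by ring
    linarith
  set i0 : Fin n := ⟨0, by omega⟩ with hi0def
  set w : Fin n → ℝ := fun i => z i - z i0 with hwdef
  set w' : Fin n → ℝ := fun i => if i = i0 then 0 else -δ with hw'def
  have hwi0 : w i0 = 0 := by simp [hwdef]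
  set s := Finset.univ.erase i0 with hsdef
  have hcard : s.card = n - 1 := by
    rw [hsdef, Finset.card_erase_of_mem (Finset.mem_univ i0), Finset.card_univ, Fintype.card_fin]
  have hcardR : ((s.card : ℝ)) = (n:ℝ) - 1 := by
    rw [hcard, Nat.cast_sub (by omega : 1 ≤ n)]; simp
  have hsne : s.Nonempty :=
    ⟨⟨1, by omega⟩, Finset.mem_erase.mpr ⟨by simp [hi0def, Fin.ext_iff], Finset.mem_univ _⟩⟩
  have hsplit : ∀ f : Fin n → ℝ, ∑ i, f i = f i0 + ∑ i ∈ s, f i := by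
    intro f
    rw [hsdef]
    exact (Finset.add_sum_erase _ f (Finset.mem_univ i0)).symm
  have hd : ∀ i ∈ s, δ < -(w i) := by
    intro i hi
    have hine : i ≠ i0 := (Finset.mem_erase.mp hi).1
    have hlt : i0 < i := by
      rw [Fin.lt_def]
      have hv : (i : ℕ) ≠ 0 := fun h => hine (Fin.ext (by simp [h, hi0def]))
      simp [hi0def]
      exact Nat.pos_of_ne_zero hv
    have := hsep i0 i hlt
    simp only [hwdef]
    linarith
  have hmain : boltz w > boltz w' := by
    rw [boltz_eq w, boltz_eq w']
    have hnum' : ∑ i, w' i * Real.exp (w' i) = ((n:ℝ) - 1) * (-(δ * Real.exp (-δ))) := by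
      rw [hsplit]
      have hcongr : ∀ i ∈ s, w' i * Real.exp (w' i) = -(δ * Real.exp (-δ)) := by
        intro i hi
        have hine : i ≠ i0 := (Finset.mem_erase.mp hi).1
        simp [hw'def, hine]
      rw [Finset.sum_congr rfl hcongr, Finset.sum_const, nsmul_eq_mul, hcardR]
      simp [hw'def]
    have hden' : ∑ j, Real.exp (w' j) = 1 + ((n:ℝ) - 1) * Real.exp (-δ) := by
      rw [hsplit]
      have hcongr : ∀ i ∈ s, Real.exp (w' i) = Real.exp (-δ) := by
        intro i hi
        have hine : i ≠ i0 := (Finset.mem_erase.mp hi).1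
        simp [hw'def, hine]
      rw [Finset.sum_congr rfl hcongr, Finset.sum_const, nsmul_eq_mul, hcardR]
      simp [hw'def]
    have hnum : ∑ i, w i * Real.exp (w i) = ∑ i ∈ s, w i * Real.exp (w i) := by
      rw [hsplit, hwi0]; simp
    have hden : ∑ j, Real.exp (w j) = 1 + ∑ i ∈ s, Real.exp (w i) := by
      rw [hsplit, hwi0]; simp
    rw [hnum', hden', hnum, hden]
    have hT : (0:ℝ) ≤ ∑ i ∈ s, Real.exp (w i) :=
      Finset.sum_nonneg (fun i _ => (Real.exp_pos _).le)
    have hEw : (0:ℝ) < 1 + ∑ i ∈ s, Real.exp (w i) := by linarith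
    have hE' : (0:ℝ) < 1 + ((n:ℝ) - 1) * Real.exp (-δ) := by linarith
    rw [gt_iff_lt, div_lt_div_iff₀ hE' hEw]
    have hper : ∀ i ∈ s,
        (-(δ * Real.exp (-δ)) - δ * (((n:ℝ) - 1) * Real.exp (-δ)) * Real.exp (w i))
          < w i * Real.exp (w i) * (1 + ((n:ℝ) - 1) * Real.exp (-δ)) := by
      intro i hi
      have hdi := hd i hi
      have hkey := key δ (((n:ℝ) - 1) * Real.exp (-δ)) (-(w i)) hc0 hcδ hdi
      rw [neg_neg] at hkey
      have heq : -(w i) * Real.exp (w i) * (1 + ((n:ℝ) - 1) * Real.exp (-δ))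
          = -(w i * Real.exp (w i) * (1 + ((n:ℝ) - 1) * Real.exp (-δ))) := by ring
      rw [heq] at hkey
      linarith
    have hsum := Finset.sum_lt_sum_of_nonempty hsne hper
    have hL : ∑ i ∈ s,
        (-(δ * Real.exp (-δ)) - δ * (((n:ℝ) - 1) * Real.exp (-δ)) * Real.exp (w i))
        = ((n:ℝ) - 1) * (-(δ * Real.exp (-δ))) * (1 + ∑ i ∈ s, Real.exp (w i)) := by
      rw [Finset.sum_sub_distrib, Finset.sum_const, nsmul_eq_mul, hcardR, ← Finset.mul_sum]
      ring
    have hR : ∑ i ∈ s, w i * Real.exp (w i) * (1 + ((n:ℝ) - 1) * Real.exp (-δ))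
        = (∑ i ∈ s, w i * Real.exp (w i)) * (1 + ((n:ℝ) - 1) * Real.exp (-δ)) :=
      (Finset.sum_mul _ _ _).symm
    rw [hL, hR] at hsum
    exact hsum
  have hz : boltz z = boltz w + z i0 := by
    rw [← boltz_shift w (z i0)]
    congr 1
    funext i
    simp [hwdef]
  have hz' : boltz (fun k : Fin n => if k = i0 then z i0 else z i0 - δ) = boltz w' + z i0 := by
    rw [← boltz_shift w' (z i0)]
    congr 1
    funext k
    by_cases h : k = i0 <;> simp [hw'def, h] <;> ring
  have hfin : boltz z > boltz (fun k : Fin n => if k = i0 then z i0 else z i0 - δ) := by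
    rw [hz, hz']
    linarith
  exact hfin
end

section
/- Let m > n ≥ 2 and δ > ln n + 1. Let z′ ∈ ℝ^m satisfy z′_i − z′_j > δ for all 1 ≤ i < j ≤ m, and let z = (z′_1, …, z′_n) ∈ ℝ^n consist of the first n entries of z′. Then Boltz(z) > Boltz(z′), where Boltz is computed in the respective dimensions. -/
lemma boltz_eq_div {n : ℕ} (z : Fin n → ℝ) :
    boltz z = (∑ i, z i * Real.exp (z i)) / (∑ i, Real.exp (z i)) := by
  unfold boltz softmaxVec
  rw [Finset.sum_div]
  exact Finset.sum_congr rfl fun i _ => (mul_div_assoc _ _ _).symm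

/-- let `m > n ≥ 2` and `δ > ln n + 1`.  If `z' ∈ ℝᵐ` has strictly decreasing
entries with gaps greater than `δ`, and `z ∈ ℝⁿ` consists of its first `n` entries, then
`Boltz(z) > Boltz(z')` (computed in the respective dimensions). -/
theorem boltz_firstEntries_gt_boltz {n m : ℕ} (hn : 2 ≤ n) (hm : n < m)
    (δ : ℝ) (hδ : δ > Real.log n + 1)
    (z' : Fin m → ℝ) (hsep : ∀ i j : Fin m, i < j → z' i - z' j > δ) :
    boltz (fun i : Fin n => z' (Fin.castLE hm.le i)) > boltz z' := by
  have hm0 : 0 < m := lt_of_le_of_lt (Nat.zero_le n) hm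
  have hδ0 : (0:ℝ) < δ := by
    have h1 : (0:ℝ) ≤ Real.log n := Real.log_nonneg (by exact_mod_cast Nat.one_le_of_lt hn)
    linarith
  set g : ℕ → ℝ := fun k => z' ⟨k % m, Nat.mod_lt k hm0⟩ with hg
  have key : ∀ k l, k < l → l < m → g k - g l > δ := by
    intro k l hkl hlm
    have hk : k < m := hkl.trans hlm
    have := hsep ⟨k, hk⟩ ⟨l, hlm⟩ (Fin.mk_lt_mk.mpr hkl)
    simpa [hg, Nat.mod_eq_of_lt hk, Nat.mod_eq_of_lt hlm] using this
  -- rewrite both boltz values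
  rw [boltz_eq_div, boltz_eq_div]
  have hsum_n : ∀ (f : ℝ → ℝ),
      (∑ i : Fin n, f (z' (Fin.castLE hm.le i))) = ∑ k ∈ Finset.range n, f (g k) := by
    intro f
    rw [← Fin.sum_univ_eq_sum_range (fun k => f (g k)) n]
    refine Finset.sum_congr rfl fun i _ => ?_
    congr 1
    simp [hg, Nat.mod_eq_of_lt (lt_of_lt_of_le i.isLt hm.le)]
    congr 1
  have hsum_m : ∀ (f : ℝ → ℝ),
      (∑ i : Fin m, f (z' i)) = ∑ k ∈ Finset.range m, f (g k) := by
    intro f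
    rw [← Fin.sum_univ_eq_sum_range (fun k => f (g k)) m]
    refine Finset.sum_congr rfl fun i _ => ?_
    congr 1
    simp [hg, Nat.mod_eq_of_lt i.isLt]
  set B := ∑ k ∈ Finset.range n, g k * Real.exp (g k) with hB
  set A := ∑ k ∈ Finset.range n, Real.exp (g k) with hA
  set D := ∑ k ∈ Finset.Ico n m, g k * Real.exp (g k) with hD
  set C := ∑ k ∈ Finset.Ico n m, Real.exp (g k) with hC
  have hsplit : ∀ (f : ℝ → ℝ), (∑ k ∈ Finset.range m, f (g k)) =
      (∑ k ∈ Finset.range n, f (g k)) + ∑ k ∈ Finset.Ico n m, f (g k) := by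
    intro f
    simp only [Finset.range_eq_Ico]
    exact (Finset.sum_Ico_consecutive _ (Nat.zero_le n) hm.le).symm
  have e1 : (∑ i : Fin n, (fun i : Fin n => z' (Fin.castLE hm.le i)) i *
      Real.exp ((fun i : Fin n => z' (Fin.castLE hm.le i)) i)) = B := by
    simpa using hsum_n (fun x => x * Real.exp x)
  have e2 : (∑ i : Fin n, Real.exp ((fun i : Fin n => z' (Fin.castLE hm.le i)) i)) = A := by
    simpa using hsum_n (fun x => Real.exp x)
  have e3 : (∑ i : Fin m, z' i * Real.exp (z' i)) = B + D := by
    rw [hsum_m (fun x => x * Real.exp x)]; exact hsplit (fun x => x * Real.exp x)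
  have e4 : (∑ i : Fin m, Real.exp (z' i)) = A + C := by
    rw [hsum_m (fun x => Real.exp x)]; exact hsplit (fun x => Real.exp x)
  rw [e1, e2, e3, e4]
  have hApos : 0 < A := Finset.sum_pos (fun k _ => Real.exp_pos _)
    ⟨0, Finset.mem_range.mpr (by omega)⟩
  have hCpos : 0 < C := Finset.sum_pos (fun k _ => Real.exp_pos _)
    ⟨n, Finset.mem_Ico.mpr ⟨le_refl n, hm⟩⟩
  -- min of first block
  have hmin : ∀ k ∈ Finset.range n, g (n-1) ≤ g k := by
    intro k hk
    rw [Finset.mem_range] at hk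
    rcases Nat.lt_or_ge k (n-1) with h | h
    · have := key k (n-1) h (by omega)
      linarith
    · have hk1 : k = n - 1 := by omega
      rw [hk1]
  have hBA : g (n-1) * A ≤ B := by
    rw [hA, Finset.mul_sum]
    exact Finset.sum_le_sum fun k hk =>
      mul_le_mul_of_nonneg_right (hmin k hk) (Real.exp_pos _).le
  have hDC : D < g (n-1) * C := by
    rw [hC, Finset.mul_sum]
    refine Finset.sum_lt_sum_of_nonempty ⟨n, Finset.mem_Ico.mpr ⟨le_refl n, hm⟩⟩ ?_
    intro k hk
    rw [Finset.mem_Ico] at hk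
    have hlt : g k < g (n-1) := by
      have := key (n-1) k (by omega) hk.2
      linarith
    exact mul_lt_mul_of_pos_right hlt (Real.exp_pos _)
  -- conclude
  rw [gt_iff_lt, div_lt_div_iff₀ (by linarith) hApos]
  have h1 : D * A < (g (n-1) * C) * A := mul_lt_mul_of_pos_right hDC hApos
  have h2 : (g (n-1) * A) * C ≤ B * C := mul_le_mul_of_nonneg_right hBA hCpos.le
  nlinarith
end

section
/- Let n ≥ 2, N ≥ 1, γ > 0 and δ ≥ 4 ln n. Let z^{(1)}, …, z^{(N)} ∈ ℝ^n satisfy: (i) |z^{(i)}_s| < γ for all i ∈ [N], s ∈ [n]; (ii) within each vector all entries are pairwise distinct; (iii) whenever z^{(i)}_s ≠ z^{(j)}_t (for any i, j ∈ [N], s, t ∈ [n]), one has |z^{(i)}_s − z^{(j)}_t| > δ; and (iv) for all i ≠ j the sets of entries of z^{(i)} and of z^{(j)} are distinct. Then |Boltz(z^{(i)})| ≤ γ for every i ∈ [N], and |Boltz(z^{(i)}) − Boltz(z^{(j)})| > (ln n)² · e^{−2γ} for all i ≠ j. -/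
open Finset Real

open Finset Real

noncomputable def Zs (S : Finset ℝ) : ℝ := ∑ x ∈ S, Real.exp x
noncomputable def Gs (S : Finset ℝ) : ℝ := ∑ x ∈ S, x * Real.exp x
noncomputable def bz (S : Finset ℝ) : ℝ := Gs S / Zs S

lemma Zs_pos {S : Finset ℝ} (h : S.Nonempty) : 0 < Zs S :=
  Finset.sum_pos (fun x _ => Real.exp_pos x) h

lemma te_exp_le {d t : ℝ} (h1 : 1 ≤ d) (h : d ≤ t) :
    t * Real.exp (-t) ≤ d * Real.exp (-d) := by
  have h2 : t ≤ d * Real.exp (t - d) := by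
    have := Real.add_one_le_exp (t - d)
    nlinarith [Real.exp_pos (t - d)]
  calc t * Real.exp (-t) ≤ (d * Real.exp (t - d)) * Real.exp (-t) := by
        nlinarith [Real.exp_pos (-t)]
    _ = d * Real.exp (-d) := by rw [mul_assoc, ← Real.exp_add]; ring_nf

lemma spread (δ : ℝ) (hδ : 0 < δ) :
    ∀ (m : ℕ) (S : Finset ℝ) (hS : S.Nonempty), S.card = m + 1 →
    (∀ x ∈ S, ∀ y ∈ S, x ≠ y → δ < |x - y|) →
    (m : ℝ) * δ ≤ S.max' hS - S.min' hS := by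
  intro m
  induction m with
  | zero =>
      intro S hS hcard hsep
      simp only [Nat.cast_zero, zero_mul]
      have := S.min'_le (S.max' hS) (S.max'_mem hS)
      linarith
  | succ m ih =>
      intro S hS hcard hsep
      set M := S.max' hS with hM
      set T := S.erase M with hT
      have hMmem : M ∈ S := S.max'_mem hS
      have hTcard : T.card = m + 1 := by
        rw [hT, Finset.card_erase_of_mem hMmem, hcard]; omega
      have hTne : T.Nonempty := Finset.card_pos.mp (by omega)
      have hTsub : T ⊆ S := Finset.erase_subset _ _
      have ihT := ih T hTne hTcard (fun x hx y hy hxy => hsep x (hTsub hx) y (hTsub hy) hxy)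
      have hmin : S.min' hS ≤ T.min' hTne := S.min'_le _ (hTsub (T.min'_mem hTne))
      have hTM : T.max' hTne ∈ S := hTsub (T.max'_mem hTne)
      have hne : T.max' hTne ≠ M := Finset.ne_of_mem_erase (T.max'_mem hTne)
      have hlt : T.max' hTne ≤ M := S.le_max' _ hTM
      have hgap : δ < |T.max' hTne - M| := hsep _ hTM _ hMmem hne
      have hgap' : δ < M - T.max' hTne := by
        rcases abs_cases (T.max' hTne - M) with ⟨h1, h2⟩ | ⟨h1, h2⟩ <;> linarith
      push_cast
      linarith

noncomputable def fD : ℝ × ℝ → ℝ := fun p => (p.1 - p.2) * Real.exp (p.1 + p.2)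

lemma fD_apply (x y : ℝ) : fD (x, y) = (x - y) * Real.exp (x + y) := rfl

lemma D_eq (A B : Finset ℝ) :
    Gs A * Zs B - Gs B * Zs A = ∑ p ∈ A ×ˢ B, fD p := by
  unfold Gs Zs fD
  rw [Finset.sum_mul_sum, Finset.sum_mul_sum, Finset.sum_product]
  rw [Finset.sum_comm (s := B) (t := A)]
  rw [← Finset.sum_sub_distrib]
  refine Finset.sum_congr rfl fun x _ => ?_
  rw [← Finset.sum_sub_distrib]
  refine Finset.sum_congr rfl fun y _ => ?_
  rw [Real.exp_add]; ring

lemma sum_antisym (C : Finset ℝ) :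
    ∑ p ∈ C ×ˢ C, fD p = 0 := by
  have h : ∑ p ∈ C ×ˢ C, fD p = -∑ p ∈ C ×ˢ C, fD p := by
    unfold fD
    rw [Finset.sum_product]
    conv_rhs => rw [Finset.sum_comm]
    rw [← Finset.sum_neg_distrib]
    refine Finset.sum_congr rfl fun x _ => ?_
    rw [← Finset.sum_neg_distrib]
    refine Finset.sum_congr rfl fun y _ => ?_
    rw [add_comm y x]; ring
  linarith

/-- weighted average is at most the max -/
lemma bz_le_max {B : Finset ℝ} (hB : B.Nonempty) : bz B ≤ B.max' hB := by
  rw [bz, div_le_iff₀ (Zs_pos hB)]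
  unfold Gs Zs
  rw [Finset.mul_sum]
  exact Finset.sum_le_sum fun y hy => by
    have := B.le_max' y hy
    nlinarith [Real.exp_pos y]

/-- lower bound: max minus deficit -/
lemma max_sub_bz_le {n : ℕ} {δ : ℝ} {B : Finset ℝ} (hB : B.Nonempty)
    (hδ1 : 1 ≤ δ) (hcard : B.card = n)
    (hs : ∀ x ∈ B, ∀ y ∈ B, x ≠ y → δ < |x - y|) :
    B.max' hB - bz B ≤ (n - 1 : ℝ) * (δ * Real.exp (-δ)) := by
  set M := B.max' hB with hM
  have hMmem : M ∈ B := B.max'_mem hB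
  have hnum : M * Zs B - Gs B = ∑ x ∈ B.erase M, (M - x) * Real.exp x := by
    unfold Gs Zs
    rw [Finset.mul_sum, ← Finset.sum_sub_distrib]
    rw [← Finset.sum_erase_add _ _ hMmem]
    simp [sub_mul]
  have hterm : ∀ x ∈ B.erase M, (M - x) * Real.exp x ≤ δ * Real.exp (-δ) * Real.exp M := by
    intro x hx
    have hxB : x ∈ B := Finset.mem_of_mem_erase hx
    have hxne : x ≠ M := Finset.ne_of_mem_erase hx
    have hxle : x ≤ M := B.le_max' x hxB
    have hgap : δ < |x - M| := hs x hxB M hMmem hxne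
    have hgap' : δ < M - x := by
      rcases abs_cases (x - M) with ⟨h1, h2⟩ | ⟨h1, h2⟩ <;> linarith
    have := te_exp_le hδ1 (le_of_lt hgap')
    calc (M - x) * Real.exp x = ((M - x) * Real.exp (-(M - x))) * Real.exp M := by
          rw [mul_assoc, ← Real.exp_add]; ring_nf
      _ ≤ (δ * Real.exp (-δ)) * Real.exp M := by
          nlinarith [Real.exp_pos M]
  have hsum : M * Zs B - Gs B ≤ (n - 1 : ℝ) * (δ * Real.exp (-δ)) * Real.exp M := by
    rw [hnum]
    calc ∑ x ∈ B.erase M, (M - x) * Real.exp x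
        ≤ ∑ _x ∈ B.erase M, δ * Real.exp (-δ) * Real.exp M := Finset.sum_le_sum hterm
      _ = ((B.erase M).card : ℝ) * (δ * Real.exp (-δ) * Real.exp M) := by
          rw [Finset.sum_const, nsmul_eq_mul]
      _ = (n - 1 : ℝ) * (δ * Real.exp (-δ)) * Real.exp M := by
          have hn1 : 1 ≤ n := by rw [← hcard]; exact hB.card_pos
          rw [Finset.card_erase_of_mem hMmem, hcard]
          push_cast [Nat.cast_sub hn1]
          ring
  have hZM : Real.exp M ≤ Zs B := Finset.single_le_sum (fun x _ => (Real.exp_pos x).le) hMmem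
  have hZpos := Zs_pos hB
  have hn1 : 1 ≤ n := by rw [← hcard]; exact hB.card_pos
  have hnonneg : (0:ℝ) ≤ (n - 1 : ℝ) * (δ * Real.exp (-δ)) := by
    have : (1:ℝ) ≤ n := by exact_mod_cast hn1
    have : (0:ℝ) ≤ δ * Real.exp (-δ) := by positivity
    nlinarith
  calc M - bz B = (M * Zs B - Gs B) / Zs B := by rw [bz]; field_simp
    _ ≤ ((n - 1 : ℝ) * (δ * Real.exp (-δ)) * Real.exp M) / Zs B := by gcongr
    _ ≤ (n - 1 : ℝ) * (δ * Real.exp (-δ)) := by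
        rw [div_le_iff₀ hZpos]
        exact mul_le_mul_of_nonneg_left hZM hnonneg

lemma log_facts {n : ℕ} (hn : 2 ≤ n) : (0.69:ℝ) < Real.log n ∧ Real.log n ≤ (n:ℝ) - 1 := by
  have h2 : (2:ℝ) ≤ n := by exact_mod_cast hn
  constructor
  · calc (0.69:ℝ) < Real.log 2 := by
          have := Real.log_two_gt_d9; norm_num at this ⊢; linarith
      _ ≤ Real.log n := Real.log_le_log (by norm_num) h2
  · have := Real.log_le_sub_one_of_pos (show (0:ℝ) < n by linarith); linarith

lemma exp_neg_delta {n : ℕ} (hn : 2 ≤ n) {δ : ℝ} (hδ : 4 * Real.log n ≤ δ) :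
    Real.exp (-δ) * (n:ℝ)^4 ≤ 1 := by
  have hn0 : (0:ℝ) < n := by
    have : (2:ℝ) ≤ n := by exact_mod_cast hn
    linarith
  have h : Real.log ((n:ℝ)^4) = 4 * Real.log n := by
    rw [Real.log_pow]; push_cast; ring
  have h2 : Real.exp (-δ) ≤ Real.exp (-(Real.log ((n:ℝ)^4))) :=
    Real.exp_le_exp.mpr (by rw [h]; linarith)
  have h3 : Real.exp (-(Real.log ((n:ℝ)^4))) = ((n:ℝ)^4)⁻¹ := by
    rw [Real.exp_neg, Real.exp_log (by positivity)]
  rw [h3] at h2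
  have hp : (0:ℝ) < (n:ℝ)^4 := by positivity
  calc Real.exp (-δ) * (n:ℝ)^4 ≤ ((n:ℝ)^4)⁻¹ * (n:ℝ)^4 :=
        mul_le_mul_of_nonneg_right h2 hp.le
    _ = 1 := inv_mul_cancel₀ (ne_of_gt hp)

/-- 2γ bound from spread -/
lemma two_gamma_bound {n : ℕ} (hn : 2 ≤ n) {γ δ : ℝ} (hδpos : 0 < δ)
    {A : Finset ℝ} (hAcard : A.card = n)
    (hb : ∀ x ∈ A, |x| < γ)
    (hs : ∀ x ∈ A, ∀ y ∈ A, x ≠ y → δ < |x - y|) :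
    ((n:ℝ) - 1) * δ ≤ 2 * γ := by
  have hAne : A.Nonempty := Finset.card_pos.mp (by omega)
  have hsp := spread δ hδpos (n - 1) A hAne (by rw [hAcard]; omega) hs
  have hmax : A.max' hAne < γ := (abs_lt.mp (hb _ (A.max'_mem hAne))).2
  have hmin : -γ < A.min' hAne := (abs_lt.mp (hb _ (A.min'_mem hAne))).1
  have hc : ((n - 1 : ℕ) : ℝ) = (n:ℝ) - 1 := by
    push_cast [Nat.cast_sub (by omega : 1 ≤ n)]; ring
  rw [hc] at hsp
  linarith

lemma caseI {n : ℕ} (hn : 2 ≤ n) {γ δ : ℝ} (hγ : 0 < γ) (hδ : 4 * Real.log n ≤ δ)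
    {A B : Finset ℝ} (hAcard : A.card = n) (hBcard : B.card = n)
    (hb : ∀ x ∈ A ∪ B, |x| < γ)
    (hs : ∀ x ∈ A ∪ B, ∀ y ∈ A ∪ B, x ≠ y → δ < |x - y|)
    (hAne : A.Nonempty) (hBne : B.Nonempty)
    (hMM : B.max' hBne < A.max' hAne) :
    Real.log n ^ 2 * Real.exp (-2 * γ) < bz A - bz B := by
  obtain ⟨hlog, hlogn⟩ := log_facts hn
  have hnR : (2:ℝ) ≤ n := by exact_mod_cast hn
  have hδ1 : (1:ℝ) ≤ δ := by linarith
  have hδpos : (0:ℝ) < δ := by linarith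
  have hend := exp_neg_delta hn hδ
  have hen0 : (0:ℝ) < Real.exp (-δ) := Real.exp_pos _
  set MA := A.max' hAne
  set MB := B.max' hBne
  have hMAu : MA ∈ A ∪ B := Finset.mem_union_left _ (A.max'_mem hAne)
  have hMBu : MB ∈ A ∪ B := Finset.mem_union_right _ (B.max'_mem hBne)
  have hgap : δ < MA - MB := by
    have := hs MA hMAu MB hMBu (ne_of_gt hMM)
    rcases abs_cases (MA - MB) with ⟨h1, h2⟩ | ⟨h1, h2⟩ <;> linarith
  have h1 : bz B ≤ MB := bz_le_max hBne
  have h2 : MA - bz A ≤ ((n:ℝ) - 1) * (δ * Real.exp (-δ)) :=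
    max_sub_bz_le hAne hδ1 hAcard
      (fun x hx y hy hxy => hs x (Finset.mem_union_left _ hx) y (Finset.mem_union_left _ hy) hxy)
  have hE : ((n:ℝ) - 1) * (δ * Real.exp (-δ)) ≤ δ / 8 := by
    have h8 : (8:ℝ) ≤ (n:ℝ)^3 := by
      have := pow_le_pow_left₀ (by norm_num : (0:ℝ) ≤ 2) hnR 3
      norm_num at this; linarith
    have hnn : ((n:ℝ) - 1) * (δ * Real.exp (-δ)) ≤ (n:ℝ) * (δ * Real.exp (-δ)) := by
      nlinarith
    have : (n:ℝ) * (δ * Real.exp (-δ)) * (n:ℝ)^3 ≤ δ := by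
      have : (n:ℝ) * (δ * Real.exp (-δ)) * (n:ℝ)^3 = δ * (Real.exp (-δ) * (n:ℝ)^4) := by ring
      rw [this]
      nlinarith
    nlinarith
  -- target is at most 1/4
  have h2γ : δ ≤ 2 * γ := by
    have := two_gamma_bound hn hδpos hAcard
      (fun x hx => hb x (Finset.mem_union_left _ hx))
      (fun x hx y hy hxy => hs x (Finset.mem_union_left _ hx) y (Finset.mem_union_left _ hy) hxy)
    nlinarith
  have htar : Real.log n ^ 2 * Real.exp (-2 * γ) ≤ 1 / 4 := by
    have e1 : Real.exp (-2 * γ) ≤ Real.exp (-δ) := Real.exp_le_exp.mpr (by linarith)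
    have e2 : Real.exp (-δ) ≤ 1 / (n:ℝ)^4 := by
      rw [le_div_iff₀ (by positivity)]; linarith
    have e3 : Real.log n ^ 2 ≤ (n:ℝ)^2 := by nlinarith
    calc Real.log n ^ 2 * Real.exp (-2 * γ) ≤ (n:ℝ)^2 * (1 / (n:ℝ)^4) := by
          apply mul_le_mul e3 (e1.trans e2) (Real.exp_pos _).le (by positivity)
      _ = 1 / (n:ℝ)^2 := by field_simp
      _ ≤ 1 / 4 := by
          apply one_div_le_one_div_of_le (by norm_num)
          have := pow_le_pow_left₀ (by norm_num : (0:ℝ) ≤ 2) hnR 2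
          norm_num at this; linarith
  linarith

lemma Zs_le {n : ℕ} (hn : 2 ≤ n) {δ : ℝ} {S : Finset ℝ} (hS : S.Nonempty)
    (hcard : S.card = n) (hend : Real.exp (-δ) * (n:ℝ)^4 ≤ 1)
    (hs : ∀ x ∈ S, ∀ y ∈ S, x ≠ y → δ < |x - y|) :
    Zs S ≤ 9/8 * Real.exp (S.max' hS) := by
  have hnR : (2:ℝ) ≤ n := by exact_mod_cast hn
  set M := S.max' hS with hM
  have hMmem : M ∈ S := S.max'_mem hS
  have hterm : ∀ x ∈ S.erase M, Real.exp x ≤ Real.exp (-δ) * Real.exp M := by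
    intro x hx
    have hxS : x ∈ S := Finset.mem_of_mem_erase hx
    have hxne : x ≠ M := Finset.ne_of_mem_erase hx
    have hxle : x ≤ M := S.le_max' x hxS
    have hgap : δ < |x - M| := hs x hxS M hMmem hxne
    have hgap' : δ < M - x := by
      rcases abs_cases (x - M) with ⟨h1, h2⟩ | ⟨h1, h2⟩ <;> linarith
    rw [← Real.exp_add]
    exact Real.exp_le_exp.mpr (by linarith)
  have h8 : (8:ℝ) ≤ (n:ℝ)^3 := by
    have := pow_le_pow_left₀ (by norm_num : (0:ℝ) ≤ 2) hnR 3
    norm_num at this; linarith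
  have hcnt : ((S.erase M).card : ℝ) = (n:ℝ) - 1 := by
    rw [Finset.card_erase_of_mem hMmem, hcard]
    have hn1 : 1 ≤ n := by omega
    push_cast [Nat.cast_sub hn1]; ring
  have hsum : ∑ x ∈ S.erase M, Real.exp x ≤ ((n:ℝ) - 1) * (Real.exp (-δ) * Real.exp M) := by
    calc ∑ x ∈ S.erase M, Real.exp x ≤ ∑ _x ∈ S.erase M, Real.exp (-δ) * Real.exp M :=
          Finset.sum_le_sum hterm
      _ = ((S.erase M).card : ℝ) * (Real.exp (-δ) * Real.exp M) := by
          rw [Finset.sum_const, nsmul_eq_mul]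
      _ = ((n:ℝ) - 1) * (Real.exp (-δ) * Real.exp M) := by rw [hcnt]
  have hsmall : ((n:ℝ) - 1) * Real.exp (-δ) ≤ 1/8 := by
    have hen0 : (0:ℝ) < Real.exp (-δ) := Real.exp_pos _
    have h1 : ((n:ℝ) - 1) * Real.exp (-δ) ≤ (n:ℝ) * Real.exp (-δ) := by nlinarith
    have h2 : (n:ℝ) * Real.exp (-δ) * (n:ℝ)^3 ≤ 1 := by
      have he : (n:ℝ) * Real.exp (-δ) * (n:ℝ)^3 = Real.exp (-δ) * (n:ℝ)^4 := by ring
      rw [he]; exact hend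
    nlinarith
  have hZ : Zs S = ∑ x ∈ S.erase M, Real.exp x + Real.exp M := by
    rw [Zs, ← Finset.sum_erase_add _ _ hMmem]
  rw [hZ]
  nlinarith [Real.exp_pos M]

set_option maxHeartbeats 2000000 in
lemma caseII {n : ℕ} (hn : 2 ≤ n) {γ δ : ℝ} (hγ : 0 < γ) (hδ : 4 * Real.log n ≤ δ)
    {A B : Finset ℝ} (hAcard : A.card = n) (hBcard : B.card = n)
    (hb : ∀ x ∈ A ∪ B, |x| < γ)
    (hs : ∀ x ∈ A ∪ B, ∀ y ∈ A ∪ B, x ≠ y → δ < |x - y|)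
    (hAne : A.Nonempty) (hBne : B.Nonempty)
    (hMM : A.max' hAne = B.max' hBne)
    {a : ℝ} (haA : a ∈ A) (haB : a ∉ B)
    (hA'le : ∀ x ∈ A, x ∉ B → x ≤ a)
    (hB'lt : ∀ y ∈ B, y ∉ A → y < a) :
    Real.log n ^ 2 * Real.exp (-2 * γ) < |bz A - bz B| := by
  classical
  obtain ⟨hlog, hlogn⟩ := log_facts hn
  have hnR : (2:ℝ) ≤ n := by exact_mod_cast hn
  have hδ1 : (1:ℝ) ≤ δ := by linarith
  have hδpos : (0:ℝ) < δ := by linarith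
  have hend := exp_neg_delta hn hδ
  have hen0 : (0:ℝ) < Real.exp (-δ) := Real.exp_pos _
  obtain ⟨M, hMdef⟩ : ∃ M, M = A.max' hAne := ⟨_, rfl⟩
  have hMA : M ∈ A := by rw [hMdef]; exact A.max'_mem hAne
  have hMB : M ∈ B := by rw [hMdef, hMM]; exact B.max'_mem hBne
  have hxleM : ∀ x ∈ A, x ≤ M := by intro x hx; rw [hMdef]; exact A.le_max' x hx
  have hyleM : ∀ y ∈ B, y ≤ M := by intro y hy; rw [hMdef, hMM]; exact B.le_max' y hy
  have haM : a ≠ M := fun h => haB (h ▸ hMB)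
  have hwgap : δ < M - a := by
    have := hs a (Finset.mem_union_left _ haA) M (Finset.mem_union_left _ hMA) haM
    have hle : a ≤ M := hxleM a haA
    rcases abs_cases (a - M) with ⟨h1, h2⟩ | ⟨h1, h2⟩ <;> linarith
  obtain ⟨w, hw⟩ : ∃ w, w = M - a := ⟨_, rfl⟩
  have hwgap' : δ < w := hw ▸ hwgap
  have hwpos : 0 < w := by linarith
  have hCC : (A ∩ B) ×ˢ (A ∩ B) ⊆ A ×ˢ B :=
    Finset.product_subset_product Finset.inter_subset_left Finset.inter_subset_right
  obtain ⟨R, hR⟩ : ∃ R, R = (A ×ˢ B) \ ((A ∩ B) ×ˢ (A ∩ B)) := ⟨_, rfl⟩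
  have hsplit : ∑ p ∈ A ×ˢ B, fD p = ∑ p ∈ R, fD p := by
    rw [hR, ← Finset.sum_sdiff hCC, sum_antisym, add_zero]
  have haMR : (a, M) ∈ R := by
    rw [hR, Finset.mem_sdiff]
    constructor
    · exact Finset.mem_product.mpr ⟨haA, hMB⟩
    · intro hmem
      have := (Finset.mem_product.mp hmem).1
      exact haB (Finset.mem_inter.mp this).2
  have hsplit2 : ∑ p ∈ R, fD p = ∑ p ∈ R.erase (a, M), fD p + fD (a, M) :=
    (Finset.sum_erase_add _ _ haMR).symm
  have hfaM : fD (a, M) = -(w * Real.exp (M + a)) := by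
    rw [fD_apply, hw, add_comm a M]; ring
  -- per-term bound on the rest
  have hterm : ∀ p ∈ R.erase (a, M), |fD p| ≤ 2 * Real.exp (-δ) * (w * Real.exp (M + a)) := by
    rintro ⟨x, y⟩ hp
    have hpne : (x, y) ≠ (a, M) := Finset.ne_of_mem_erase hp
    have hpR : (x, y) ∈ R := Finset.mem_of_mem_erase hp
    rw [hR, Finset.mem_sdiff] at hpR
    obtain ⟨hpAB, hpCC⟩ := hpR
    have hxA : x ∈ A := (Finset.mem_product.mp hpAB).1
    have hyB : y ∈ B := (Finset.mem_product.mp hpAB).2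
    have hxM : x ≤ M := hxleM x hxA
    have hyM : y ≤ M := hyleM y hyB
    have hxy : x ≠ y := by
      intro h
      apply hpCC
      exact Finset.mem_product.mpr
        ⟨Finset.mem_inter.mpr ⟨hxA, h ▸ hyB⟩, Finset.mem_inter.mpr ⟨h ▸ hxA, hyB⟩⟩
    have hgapd : δ < |x - y| :=
      hs x (Finset.mem_union_left _ hxA) y (Finset.mem_union_right _ hyB) hxy
    have hd0 : (0:ℝ) ≤ |x - y| := abs_nonneg _
    have claim1 : x + y ≤ M + a - δ := by
      by_cases hxB : x ∈ B
      · have hyA : y ∉ A := by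
          intro hyA
          exact hpCC (Finset.mem_product.mpr
            ⟨Finset.mem_inter.mpr ⟨hxA, hxB⟩, Finset.mem_inter.mpr ⟨hyA, hyB⟩⟩)
        have hya : y < a := hB'lt y hyB hyA
        have := hs y (Finset.mem_union_right _ hyB) a (Finset.mem_union_left _ haA)
          (ne_of_lt hya)
        have hya' : δ < a - y := by
          rcases abs_cases (y - a) with ⟨h1, h2⟩ | ⟨h1, h2⟩ <;> linarith
        linarith
      · have hxa : x ≤ a := hA'le x hxA hxB
        by_cases hyM' : y = M
        · have hxna : x ≠ a := by
            intro h; exact hpne (by rw [h, hyM'])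
          have := hs x (Finset.mem_union_left _ hxA) a (Finset.mem_union_left _ haA) hxna
          have hxa' : δ < a - x := by
            rcases abs_cases (x - a) with ⟨h1, h2⟩ | ⟨h1, h2⟩ <;> linarith
          rw [hyM']; linarith
        · have := hs y (Finset.mem_union_right _ hyB) M (Finset.mem_union_left _ hMA) hyM'
          have hyM'' : δ < M - y := by
            rcases abs_cases (y - M) with ⟨h1, h2⟩ | ⟨h1, h2⟩ <;> linarith
          linarith
    have claim2 : x + y ≤ 2 * M - |x - y| := by
      rcases abs_cases (x - y) with ⟨h1, h2⟩ | ⟨h1, h2⟩ <;> linarith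
    have hfp : |fD (x, y)| = |x - y| * Real.exp (x + y) := by
      rw [fD_apply, abs_mul, abs_of_pos (Real.exp_pos _)]
    rw [hfp]
    by_cases hcase : |x - y| ≤ w + δ
    · calc |x - y| * Real.exp (x + y) ≤ |x - y| * Real.exp (M + a - δ) :=
            mul_le_mul_of_nonneg_left (Real.exp_le_exp.mpr claim1) hd0
        _ ≤ (w + δ) * Real.exp (M + a - δ) :=
            mul_le_mul_of_nonneg_right hcase (Real.exp_pos _).le
        _ ≤ 2 * w * Real.exp (M + a - δ) := by
            apply mul_le_mul_of_nonneg_right _ (Real.exp_pos _).le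
            linarith
        _ = 2 * Real.exp (-δ) * (w * Real.exp (M + a)) := by
            rw [show M + a - δ = -δ + (M + a) by ring, Real.exp_add]; ring
    · push_neg at hcase
      have hu : 0 < |x - y| - w - δ := by linarith
      have hexpu := Real.add_one_le_exp (|x - y| - w - δ)
      have hkey : |x - y| ≤ 2 * w * Real.exp (|x - y| - w - δ) := by
        nlinarith [Real.exp_pos (|x - y| - w - δ)]
      calc |x - y| * Real.exp (x + y) ≤ |x - y| * Real.exp (2 * M - |x - y|) :=
            mul_le_mul_of_nonneg_left (Real.exp_le_exp.mpr claim2) hd0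
        _ ≤ (2 * w * Real.exp (|x - y| - w - δ)) * Real.exp (2 * M - |x - y|) :=
            mul_le_mul_of_nonneg_right hkey (Real.exp_pos _).le
        _ = 2 * Real.exp (-δ) * (w * Real.exp (M + a)) := by
            rw [mul_assoc (2 * w), ← Real.exp_add]
            rw [show |x - y| - w - δ + (2 * M - |x - y|) = -δ + (M + a) by rw [hw]; ring]
            rw [Real.exp_add]; ring
  -- sum of the error terms
  have hcard_le : ((R.erase (a, M)).card : ℝ) ≤ (n:ℝ)^2 := by
    have h1 : (R.erase (a, M)).card ≤ (A ×ˢ B).card := by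
      apply Finset.card_le_card
      intro p hp
      have h := Finset.mem_of_mem_erase hp
      rw [hR, Finset.mem_sdiff] at h
      exact h.1
    have h2 : (A ×ˢ B).card = n * n := by
      rw [Finset.card_product, hAcard, hBcard]
    have h3 : ((R.erase (a, M)).card : ℝ) ≤ ((n * n : ℕ) : ℝ) := by
      exact_mod_cast h1.trans_eq h2
    push_cast at h3
    nlinarith
  have herr : |∑ p ∈ R.erase (a, M), fD p| ≤ 1/2 * (w * Real.exp (M + a)) := by
    have h1 : |∑ p ∈ R.erase (a, M), fD p| ≤ ∑ p ∈ R.erase (a, M), |fD p| :=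
      Finset.abs_sum_le_sum_abs _ _
    have h2 : ∑ p ∈ R.erase (a, M), |fD p|
        ≤ ((R.erase (a, M)).card : ℝ) * (2 * Real.exp (-δ) * (w * Real.exp (M + a))) := by
      calc ∑ p ∈ R.erase (a, M), |fD p|
          ≤ ∑ _p ∈ R.erase (a, M), 2 * Real.exp (-δ) * (w * Real.exp (M + a)) :=
            Finset.sum_le_sum hterm
        _ = _ := by rw [Finset.sum_const, nsmul_eq_mul]
    have hpos : (0:ℝ) ≤ 2 * Real.exp (-δ) * (w * Real.exp (M + a)) := by positivity
    have h3 : ((R.erase (a, M)).card : ℝ) * (2 * Real.exp (-δ) * (w * Real.exp (M + a)))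
        ≤ (n:ℝ)^2 * (2 * Real.exp (-δ) * (w * Real.exp (M + a))) :=
      mul_le_mul_of_nonneg_right hcard_le hpos
    have h4 : (n:ℝ)^2 * (2 * Real.exp (-δ)) ≤ 1/2 := by
      have hn2 : (4:ℝ) ≤ (n:ℝ)^2 := by nlinarith
      have h5 : (n:ℝ)^2 * (2 * Real.exp (-δ)) * (n:ℝ)^2 ≤ 2 := by
        have he : (n:ℝ)^2 * (2 * Real.exp (-δ)) * (n:ℝ)^2 = 2 * (Real.exp (-δ) * (n:ℝ)^4) := by
          ring
        rw [he]; linarith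
      have hXpos : (0:ℝ) ≤ (n:ℝ)^2 * (2 * Real.exp (-δ)) := by positivity
      nlinarith [mul_le_mul_of_nonneg_left hn2 hXpos]
    have h6 : (n:ℝ)^2 * (2 * Real.exp (-δ) * (w * Real.exp (M + a)))
        ≤ 1/2 * (w * Real.exp (M + a)) := by
      have hpos2 : (0:ℝ) ≤ w * Real.exp (M + a) := by positivity
      calc (n:ℝ)^2 * (2 * Real.exp (-δ) * (w * Real.exp (M + a)))
          = ((n:ℝ)^2 * (2 * Real.exp (-δ))) * (w * Real.exp (M + a)) := by ring
        _ ≤ 1/2 * (w * Real.exp (M + a)) := mul_le_mul_of_nonneg_right h4 hpos2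
    linarith
  -- |D| lower bound
  have hDle : ∑ p ∈ A ×ˢ B, fD p ≤ -(1/2 * (w * Real.exp (M + a))) := by
    rw [hsplit, hsplit2, hfaM]
    have := (abs_le.mp herr).2
    linarith
  have hDabs : 1/2 * (w * Real.exp (M + a)) ≤ |∑ p ∈ A ×ˢ B, fD p| := by
    have h1 : 1/2 * (w * Real.exp (M + a)) ≤ -(∑ p ∈ A ×ˢ B, fD p) := by linarith
    exact h1.trans (neg_le_abs _)
  -- Z bounds
  have hZApos := Zs_pos hAne
  have hZBpos := Zs_pos hBne
  have hZA : Zs A ≤ 9/8 * Real.exp M := by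
    have h := Zs_le hn hAne hAcard hend
      (fun x hx y hy hxy => hs x (Finset.mem_union_left _ hx) y (Finset.mem_union_left _ hy) hxy)
    rw [← hMdef] at h; exact h
  have hZB : Zs B ≤ 9/8 * Real.exp M := by
    have h := Zs_le hn hBne hBcard hend
      (fun x hx y hy hxy =>
        hs x (Finset.mem_union_right _ hx) y (Finset.mem_union_right _ hy) hxy)
    rw [← hMM, ← hMdef] at h; exact h
  have hdiff : bz A - bz B = (∑ p ∈ A ×ˢ B, fD p) / (Zs A * Zs B) := by
    rw [bz, bz, div_sub_div _ _ (ne_of_gt hZApos) (ne_of_gt hZBpos), ← D_eq]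
    congr 1; ring
  have habs : |bz A - bz B| = |∑ p ∈ A ×ˢ B, fD p| / (Zs A * Zs B) := by
    rw [hdiff, abs_div, abs_of_pos (mul_pos hZApos hZBpos)]
  have hZZ : Zs A * Zs B ≤ (81/64) * (Real.exp M * Real.exp M) := by
    have := mul_le_mul hZA hZB hZBpos.le (by positivity)
    nlinarith
  have hlb : 32/81 * (w * Real.exp (a - M)) ≤ |∑ p ∈ A ×ˢ B, fD p| / (Zs A * Zs B) := by
    have h1 : (1/2 * (w * Real.exp (M + a))) / ((81/64) * (Real.exp M * Real.exp M))
        ≤ |∑ p ∈ A ×ˢ B, fD p| / (Zs A * Zs B) :=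
      div_le_div₀ (abs_nonneg _) hDabs (mul_pos hZApos hZBpos) hZZ
    have h2 : (1/2 * (w * Real.exp (M + a))) / ((81/64) * (Real.exp M * Real.exp M))
        = 32/81 * (w * Real.exp (a - M)) := by
      rw [show M + a = M + a from rfl, Real.exp_add, Real.exp_sub]
      have hEM : Real.exp M ≠ 0 := ne_of_gt (Real.exp_pos M)
      field_simp
      ring
    linarith
  have hexpw : Real.exp (a - M) = Real.exp (-w) := by
    congr 1; rw [hw]; ring
  -- w ≤ 2γ, w ≥ 1
  have hMγ := abs_lt.mp (hb M (Finset.mem_union_left _ hMA))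
  have haγ := abs_lt.mp (hb a (Finset.mem_union_left _ haA))
  have hw2γ : w ≤ 2 * γ := by rw [hw]; linarith [hMγ.2, haγ.1]
  have hw1 : (1:ℝ) ≤ w := by linarith
  have hmono : 2 * γ * Real.exp (-(2 * γ)) ≤ w * Real.exp (-w) := te_exp_le hw1 hw2γ
  have h2γ : ((n:ℝ) - 1) * δ ≤ 2 * γ :=
    two_gamma_bound hn hδpos hAcard
      (fun x hx => hb x (Finset.mem_union_left _ hx))
      (fun x hx y hy hxy =>
        hs x (Finset.mem_union_left _ hx) y (Finset.mem_union_left _ hy) hxy)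
  have hL : Real.log n ^ 2 < 32/81 * (2 * γ) := by
    have hLle : Real.log n * (4 * Real.log n) ≤ ((n:ℝ) - 1) * δ :=
      mul_le_mul hlogn hδ (by linarith) (by linarith)
    nlinarith
  calc Real.log n ^ 2 * Real.exp (-2 * γ)
      = Real.log n ^ 2 * Real.exp (-(2 * γ)) := by rw [show (-2) * γ = -(2 * γ) by ring]
    _ < (32/81 * (2 * γ)) * Real.exp (-(2 * γ)) :=
        mul_lt_mul_of_pos_right hL (Real.exp_pos _)
    _ = 32/81 * (2 * γ * Real.exp (-(2 * γ))) := by ring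
    _ ≤ 32/81 * (w * Real.exp (-w)) := by
        apply mul_le_mul_of_nonneg_left hmono (by norm_num)
    _ = 32/81 * (w * Real.exp (a - M)) := by rw [hexpw]
    _ ≤ |∑ p ∈ A ×ˢ B, fD p| / (Zs A * Zs B) := hlb
    _ = |bz A - bz B| := habs.symm

lemma keylemma {n : ℕ} (hn : 2 ≤ n) {γ δ : ℝ} (hγ : 0 < γ) (hδ : 4 * Real.log n ≤ δ)
    {A B : Finset ℝ} (hAcard : A.card = n) (hBcard : B.card = n)
    (hb : ∀ x ∈ A ∪ B, |x| < γ)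
    (hs : ∀ x ∈ A ∪ B, ∀ y ∈ A ∪ B, x ≠ y → δ < |x - y|)
    (hne : A ≠ B) :
    Real.log n ^ 2 * Real.exp (-2 * γ) < |bz A - bz B| := by
  classical
  have hAne : A.Nonempty := Finset.card_pos.mp (by rw [hAcard]; omega)
  have hBne : B.Nonempty := Finset.card_pos.mp (by rw [hBcard]; omega)
  have hb' : ∀ x ∈ B ∪ A, |x| < γ := by
    intro x hx; apply hb; rwa [Finset.union_comm]
  have hs' : ∀ x ∈ B ∪ A, ∀ y ∈ B ∪ A, x ≠ y → δ < |x - y| := by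
    intro x hx y hy hxy
    rw [Finset.union_comm] at hx hy
    exact hs x hx y hy hxy
  rcases lt_trichotomy (A.max' hAne) (B.max' hBne) with hlt | heq | hgt
  · have h := caseI hn hγ hδ hBcard hAcard hb' hs' hBne hAne hlt
    calc Real.log n ^ 2 * Real.exp (-2 * γ) < bz B - bz A := h
      _ ≤ |bz B - bz A| := le_abs_self _
      _ = |bz A - bz B| := abs_sub_comm _ _
  · -- equal maxima: compare at the max of the symmetric difference
    have hEne : ((A \ B) ∪ (B \ A)).Nonempty := by
      have h1 : (A \ B).Nonempty := by
        rw [Finset.sdiff_nonempty]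
        intro hsub
        exact hne (Finset.eq_of_subset_of_card_le hsub (by rw [hAcard, hBcard]))
      exact h1.mono Finset.subset_union_left
    obtain ⟨a, haE, hamax⟩ : ∃ a ∈ (A \ B) ∪ (B \ A),
        ∀ y ∈ (A \ B) ∪ (B \ A), y ≤ a :=
      ⟨_, ((A \ B) ∪ (B \ A)).max'_mem hEne, fun y hy => Finset.le_max' _ y hy⟩
    rcases Finset.mem_union.mp haE with haAB | haBA
    · obtain ⟨haA, haB⟩ := Finset.mem_sdiff.mp haAB
      exact caseII hn hγ hδ hAcard hBcard hb hs hAne hBne heq haA haB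
        (fun x hxA hxB =>
          hamax x (Finset.mem_union_left _ (Finset.mem_sdiff.mpr ⟨hxA, hxB⟩)))
        (fun y hyB hyA =>
          lt_of_le_of_ne
            (hamax y (Finset.mem_union_right _ (Finset.mem_sdiff.mpr ⟨hyB, hyA⟩)))
            (fun h => hyA (h ▸ haA)))
    · obtain ⟨haB, haA⟩ := Finset.mem_sdiff.mp haBA
      have h := caseII hn hγ hδ hBcard hAcard hb' hs' hBne hAne heq.symm haB haA
        (fun x hxB hxA =>
          hamax x (Finset.mem_union_right _ (Finset.mem_sdiff.mpr ⟨hxB, hxA⟩)))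
        (fun y hyA hyB =>
          lt_of_le_of_ne
            (hamax y (Finset.mem_union_left _ (Finset.mem_sdiff.mpr ⟨hyA, hyB⟩)))
            (fun h => hyB (h ▸ haB)))
      rwa [abs_sub_comm] at h
  · have h := caseI hn hγ hδ hAcard hBcard hb hs hAne hBne hgt
    calc Real.log n ^ 2 * Real.exp (-2 * γ) < bz A - bz B := h
      _ ≤ |bz A - bz B| := le_abs_self _

/-- the Boltzmann operator preserves separation.  Given `(γ, δ)`-separated
vectors `z⁽¹⁾, …, z⁽ᴺ⁾` with `δ ≥ 4 ln n`, pairwise-distinct entries in each vector and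
distinct entry sets across vectors, one has `|Boltz(z⁽ⁱ⁾)| ≤ γ` and
`|Boltz(z⁽ⁱ⁾) − Boltz(z⁽ʲ⁾)| > (ln n)² e^{−2γ}` for `i ≠ j`. -/
theorem boltz_preserves_separation {n N : ℕ} (hn : 2 ≤ n) (hN : 1 ≤ N)
    (γ δ : ℝ) (hγ : 0 < γ) (hδ : 4 * Real.log n ≤ δ)
    (z : Fin N → Fin n → ℝ)
    (hbound : ∀ i s, |z i s| < γ)
    (hdistinct : ∀ i, ∀ s t : Fin n, s ≠ t → z i s ≠ z i t)
    (hsep : ∀ i j, ∀ s t : Fin n, z i s ≠ z j t → |z i s - z j t| > δ)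
    (hsets : ∀ i j, i ≠ j → Set.range (z i) ≠ Set.range (z j)) :
    (∀ i, |boltz (z i)| ≤ γ) ∧
      (∀ i j, i ≠ j →
        |boltz (z i) - boltz (z j)| > Real.log n ^ 2 * Real.exp (-2 * γ)) := by
  classical
  haveI : Nonempty (Fin n) := ⟨⟨0, by omega⟩⟩
  have hZpos : ∀ i, (0:ℝ) < ∑ s : Fin n, Real.exp (z i s) := fun i =>
    Finset.sum_pos (fun s _ => Real.exp_pos _) Finset.univ_nonempty
  -- part 1
  have part1 : ∀ i, |boltz (z i)| ≤ γ := by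
    intro i
    have hp : ∀ s : Fin n, 0 ≤ softmaxVec (z i) s := fun s => by
      rw [softmaxVec]
      positivity
    have hsum1 : ∑ s : Fin n, softmaxVec (z i) s = 1 := by
      simp only [softmaxVec]
      rw [← Finset.sum_div, div_self (ne_of_gt (hZpos i))]
    calc |boltz (z i)| ≤ ∑ s : Fin n, |z i s * softmaxVec (z i) s| :=
          Finset.abs_sum_le_sum_abs _ _
      _ ≤ ∑ s : Fin n, γ * softmaxVec (z i) s := by
          apply Finset.sum_le_sum
          intro s _
          rw [abs_mul, abs_of_nonneg (hp s)]
          exact mul_le_mul_of_nonneg_right (le_of_lt (hbound i s)) (hp s)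
      _ = γ := by rw [← Finset.mul_sum, hsum1, mul_one]
  refine ⟨part1, ?_⟩
  intro i j hij
  -- injectivity
  have hinj : ∀ k, Function.Injective (z k) := by
    intro k s t h
    by_contra hst
    exact hdistinct k s t hst h
  -- boltz = bz of image
  have hbz : ∀ k, boltz (z k) = bz (Finset.image (z k) Finset.univ) := by
    intro k
    have h1 : boltz (z k) = (∑ s : Fin n, z k s * Real.exp (z k s)) /
        (∑ s : Fin n, Real.exp (z k s)) := by
      unfold boltz softmaxVec
      rw [Finset.sum_div]
      exact Finset.sum_congr rfl fun s _ => (mul_div_assoc _ _ _).symm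
    rw [h1, bz, Gs, Zs]
    rw [Finset.sum_image (fun s _ t _ h => hinj k h),
        Finset.sum_image (fun s _ t _ h => hinj k h)]
  set A := Finset.image (z i) Finset.univ with hA
  set B := Finset.image (z j) Finset.univ with hB
  have hAcard : A.card = n := by
    rw [hA, Finset.card_image_of_injective _ (hinj i), Finset.card_univ, Fintype.card_fin]
  have hBcard : B.card = n := by
    rw [hB, Finset.card_image_of_injective _ (hinj j), Finset.card_univ, Fintype.card_fin]
  have hmem : ∀ x ∈ A ∪ B, (∃ s, z i s = x) ∨ (∃ s, z j s = x) := by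
    intro x hx
    rcases Finset.mem_union.mp hx with h | h
    · left; obtain ⟨s, _, hsx⟩ := Finset.mem_image.mp h; exact ⟨s, hsx⟩
    · right; obtain ⟨s, _, hsx⟩ := Finset.mem_image.mp h; exact ⟨s, hsx⟩
  have hb : ∀ x ∈ A ∪ B, |x| < γ := by
    intro x hx
    rcases hmem x hx with ⟨s, hsx⟩ | ⟨s, hsx⟩
    · rw [← hsx]; exact hbound i s
    · rw [← hsx]; exact hbound j s
  have hsAB : ∀ x ∈ A ∪ B, ∀ y ∈ A ∪ B, x ≠ y → δ < |x - y| := by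
    intro x hx y hy hxy
    rcases hmem x hx with ⟨s, hsx⟩ | ⟨s, hsx⟩ <;>
      rcases hmem y hy with ⟨t, hty⟩ | ⟨t, hty⟩ <;>
      [ exact hsx ▸ hty ▸ hsep i i s t (by rw [hsx, hty]; exact hxy);
        exact hsx ▸ hty ▸ hsep i j s t (by rw [hsx, hty]; exact hxy);
        exact hsx ▸ hty ▸ hsep j i s t (by rw [hsx, hty]; exact hxy);
        exact hsx ▸ hty ▸ hsep j j s t (by rw [hsx, hty]; exact hxy) ]
  have hne : A ≠ B := by
    intro h
    apply hsets i j hij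
    have : (A : Set ℝ) = (B : Set ℝ) := by rw [h]
    rwa [hA, hB, Finset.coe_image, Finset.coe_image, Finset.coe_univ,
      Set.image_univ, Set.image_univ] at this
  have hkey := keylemma hn hγ hδ hAcard hBcard hb hsAB hne
  rw [hbz i, hbz j]
  exact hkey
end

section
/- For every d ≥ 1 and every nonempty finite subset 𝒳 ⊂ ℝ^d, there exists a unit vector u ∈ ℝ^d such that for all x, x′ ∈ 𝒳: (1/|𝒳|²)·√(8/(πd))·‖x − x′‖₂ ≤ |u^⊤(x − x′)| ≤ ‖x − x′‖₂, where |𝒳| denotes the cardinality of 𝒳. -/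
open MeasureTheory Real

lemma gamma_add_half_le (y : ℝ) (hy : 0 < y) :
    Real.Gamma (y + 1/2) ≤ Real.sqrt y * Real.Gamma y := by
  have h1 : (0:ℝ) < Real.Gamma y := Real.Gamma_pos_of_pos hy
  have h3 : (0:ℝ) < Real.Gamma (y + 1/2) := Real.Gamma_pos_of_pos (by linarith)
  have hc := Real.convexOn_log_Gamma.2 (Set.mem_Ioi.mpr hy)
    (Set.mem_Ioi.mpr (show (0:ℝ) < y + 1 by linarith))
    (by norm_num : (0:ℝ) ≤ 1/2) (by norm_num : (0:ℝ) ≤ 1/2) (by norm_num)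
  have hmid : (1/2 : ℝ) • y + (1/2 : ℝ) • (y + 1) = y + 1/2 := by simp; ring
  rw [hmid] at hc
  simp only [Function.comp_apply, smul_eq_mul] at hc
  have hsq : Real.log (Real.sqrt y * Real.Gamma y)
      = 1/2 * Real.log (Real.Gamma y) + 1/2 * Real.log (Real.Gamma (y+1)) := by
    rw [Real.Gamma_add_one (ne_of_gt hy), Real.log_mul (by positivity) (ne_of_gt h1),
      Real.log_mul (ne_of_gt hy) (ne_of_gt h1), Real.log_sqrt hy.le]
    ring
  have := hc.trans_eq hsq.symm
  exact (Real.log_le_log_iff h3 (by positivity)).mp this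

lemma key_ratio (d : ℕ) (hd : 1 ≤ d) :
    Real.sqrt (8 / (π * d)) * (Real.sqrt π ^ (d-1) / Real.Gamma (((d:ℕ) - 1 : ℕ) / 2 + 1))
      < Real.sqrt π ^ d / Real.Gamma ((d:ℝ) / 2 + 1) := by
  obtain ⟨k, rfl⟩ : ∃ k, d = k + 1 := ⟨d - 1, (Nat.succ_pred_eq_of_pos hd).symm⟩
  simp only [Nat.add_sub_cancel]
  set K : ℝ := (k : ℝ) with hK
  have hK0 : 0 ≤ K := Nat.cast_nonneg k
  have hcast : ((k + 1 : ℕ) : ℝ) = K + 1 := by push_cast; ring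
  rw [hcast]
  have hG1 : (0:ℝ) < Real.Gamma ((k:ℝ)/2 + 1) := Real.Gamma_pos_of_pos (by positivity)
  have hG2 : (0:ℝ) < Real.Gamma ((K+1)/2 + 1) := Real.Gamma_pos_of_pos (by positivity)
  have hP : (0:ℝ) < Real.sqrt π ^ k := by positivity
  -- G2 ≤ √(K/2+1) * G1
  have hg : Real.Gamma ((K+1)/2 + 1) ≤ Real.sqrt (K/2 + 1) * Real.Gamma (K/2 + 1) := by
    have := gamma_add_half_le (K/2 + 1) (by positivity)
    have he : (K+1)/2 + 1 = K/2 + 1 + 1/2 := by ring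
    rwa [he]
  -- the scalar inequality
  have hscal : Real.sqrt (8 / (π * (K+1))) * Real.sqrt (K/2 + 1) < Real.sqrt π := by
    rw [← Real.sqrt_mul (by positivity)]
    apply Real.sqrt_lt_sqrt (by positivity)
    rw [div_mul_eq_mul_div, div_lt_iff₀ (by positivity)]
    have h9 : (9:ℝ) < π * π := by nlinarith [Real.pi_gt_three]
    have h10 : (0:ℝ) ≤ (π * π - 9) * K := mul_nonneg (by linarith) hK0
    nlinarith
  have hA : 0 ≤ Real.sqrt (8 / (π * (K+1))) := Real.sqrt_nonneg _
  have hs2 : (0:ℝ) < Real.sqrt (K/2+1) := by positivity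
  have hspP : Real.sqrt π ^ (k+1) = Real.sqrt π * Real.sqrt π ^ k := by rw [pow_succ]; ring
  rw [hspP]
  have h1 : Real.sqrt (8/(π*(K+1))) * (Real.sqrt π ^ k / Real.Gamma ((k:ℝ)/2+1))
      < Real.sqrt π * Real.sqrt π ^ k / (Real.sqrt (K/2+1) * Real.Gamma ((k:ℝ)/2+1)) := by
    rw [mul_div_assoc']
    rw [div_lt_div_iff₀ hG1 (by positivity)]
    nlinarith [mul_lt_mul_of_pos_right hscal (mul_pos hP hG1)]
  have h2 : Real.sqrt π * Real.sqrt π ^ k / (Real.sqrt (K/2+1) * Real.Gamma ((k:ℝ)/2+1))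
      ≤ Real.sqrt π * Real.sqrt π ^ k / Real.Gamma ((K+1)/2+1) :=
    div_le_div_of_nonneg_left (by positivity) hG2 hg
  exact h1.trans_le h2

lemma volume_pi_sumsq (k : ℕ) :
    volume {z : Fin k → ℝ | ∑ i, z i ^ 2 < 1}
      = ENNReal.ofReal (Real.sqrt π ^ k / Real.Gamma ((k:ℝ)/2 + 1)) := by
  rcases Nat.eq_zero_or_pos k with hk | hk
  · subst hk
    have h1 : {z : Fin 0 → ℝ | ∑ i, z i ^ 2 < 1} = Set.univ := by
      ext z; simp
    rw [h1]
    have h2 : (volume : Measure (Fin 0 → ℝ)) Set.univ = 1 := by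
      rw [MeasureTheory.Measure.volume_pi_eq_dirac (isEmptyElim), measure_univ]
    rw [h2]
    norm_num [Real.Gamma_one]
  · haveI : Nonempty (Fin k) := ⟨⟨0, hk⟩⟩
    have hb := EuclideanSpace.volume_ball (Fin k) 0 1
    have hmp := EuclideanSpace.volume_preserving_symm_measurableEquiv_toLp (Fin k)
    have hmeas : MeasurableSet {z : Fin k → ℝ | ∑ i, z i ^ 2 < 1} := by
      apply measurableSet_lt _ measurable_const
      exact Finset.measurable_sum _ fun i _ => (measurable_pi_apply i).pow_const 2
    have hpre : (MeasurableEquiv.toLp 2 (Fin k → ℝ)).symm ⁻¹' {z : Fin k → ℝ | ∑ i, z i ^ 2 < 1}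
        = Metric.ball (0 : EuclideanSpace ℝ (Fin k)) 1 := by
      rw [EuclideanSpace.ball_zero_eq _ zero_le_one]
      ext y
      simp
    have := hmp.measure_preimage hmeas.nullMeasurableSet
    rw [hpre] at this
    rw [← this, hb]
    simp [Fintype.card_fin]

lemma slab_volume {d : ℕ} (hd : 1 ≤ d) (v : EuclideanSpace ℝ (Fin d)) (hv : ‖v‖ = 1)
    (a : ℝ) (ha : 0 ≤ a) :
    volume {g : EuclideanSpace ℝ (Fin d) | |(inner ℝ v g : ℝ)| ≤ a ∧ ‖g‖ < 1}
      ≤ ENNReal.ofReal (2*a)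
        * ENNReal.ofReal (Real.sqrt π ^ (d-1) / Real.Gamma (((d-1:ℕ):ℝ)/2 + 1)) := by
  obtain ⟨k, rfl⟩ : ∃ k, d = k + 1 := ⟨d-1, (Nat.succ_pred_eq_of_pos hd).symm⟩
  simp only [Nat.add_sub_cancel]
  -- orthonormal basis with `b 0 = v`
  have hcard : Module.finrank ℝ (EuclideanSpace ℝ (Fin (k+1))) = Fintype.card (Fin (k+1)) := by
    simp [finrank_euclideanSpace]
  have horth : Orthonormal ℝ (Set.restrict {(0 : Fin (k+1))} (fun _ => v)) := by
    constructor
    · intro i; exact hv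
    · intro i j hij
      exfalso
      apply hij
      apply Subtype.ext
      have hi := i.2; have hj := j.2
      simp only [Set.mem_singleton_iff] at hi hj
      rw [hi, hj]
  obtain ⟨b, hb0⟩ := horth.exists_orthonormalBasis_extension_of_card_eq hcard
  have hbv : b 0 = v := hb0 0 rfl
  -- the slab as a preimage under `b.repr`
  set e := (MeasurableEquiv.toLp 2 (Fin (k+1) → ℝ)).symm with he
  set T : Set (EuclideanSpace ℝ (Fin (k+1))) :=
    (e ⁻¹' {z : Fin (k+1) → ℝ | |z 0| ≤ a}) ∩ Metric.ball 0 1 with hT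
  have hTmem : ∀ y : EuclideanSpace ℝ (Fin (k+1)), y ∈ T ↔ |y 0| ≤ a ∧ ‖y‖ < 1 := by
    intro y
    simp only [hT, Set.mem_inter_iff, Set.mem_preimage, Set.mem_setOf_eq, mem_ball_zero_iff]
    exact and_congr Iff.rfl Iff.rfl
  have hTmeas : MeasurableSet T := by
    apply MeasurableSet.inter
    · exact e.measurable (measurableSet_le ((measurable_pi_apply 0).abs) measurable_const)
    · exact measurableSet_ball
  have hS : {g : EuclideanSpace ℝ (Fin (k+1)) | |(inner ℝ v g : ℝ)| ≤ a ∧ ‖g‖ < 1}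
      = b.repr ⁻¹' T := by
    ext g
    rw [Set.mem_preimage, hTmem]
    have h1 : b.repr g 0 = (inner ℝ v g : ℝ) := by
      rw [b.repr_apply_apply g 0, hbv]
    have h2 : ‖b.repr g‖ = ‖g‖ := b.repr.norm_map g
    rw [h1, h2]
    rfl
  rw [hS, (b.measurePreserving_repr).measure_preimage hTmeas.nullMeasurableSet]
  -- compare with a product set in the pi space
  set T' : Set (Fin (k+1) → ℝ) :=
    {z | |z 0| ≤ a ∧ ∑ i : Fin k, z i.succ ^ 2 < 1} with hT'
  have hT'meas : MeasurableSet T' := by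
    have h1 : MeasurableSet {z : Fin (k+1) → ℝ | |z 0| ≤ a} :=
      measurableSet_le ((measurable_pi_apply 0).abs) measurable_const
    have h2 : MeasurableSet {z : Fin (k+1) → ℝ | ∑ i : Fin k, z i.succ ^ 2 < 1} :=
      measurableSet_lt (Finset.measurable_sum _ fun i _ =>
        ((measurable_pi_apply i.succ).pow_const 2)) measurable_const
    exact h1.inter h2
  have hsub : T ⊆ e ⁻¹' T' := by
    intro y hy
    rw [hTmem] at hy
    obtain ⟨h1, h2⟩ := hy
    have hy' : y ∈ Metric.ball (0 : EuclideanSpace ℝ (Fin (k+1))) 1 := mem_ball_zero_iff.mpr h2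
    rw [EuclideanSpace.ball_zero_eq _ zero_le_one] at hy'
    have hsum : ∑ i : Fin (k+1), y i ^ 2 < 1 := by simpa using hy'
    refine Set.mem_preimage.mpr ?_
    show |y 0| ≤ a ∧ ∑ i : Fin k, y i.succ ^ 2 < 1
    refine ⟨h1, ?_⟩
    rw [Fin.sum_univ_succ (fun i => y i ^ 2)] at hsum
    have h0 : (0:ℝ) ≤ y 0 ^ 2 := sq_nonneg _
    linarith
  have step1 : volume T ≤ volume (e ⁻¹' T') := measure_mono hsub
  have step2 : volume (e ⁻¹' T') = volume T' :=
    (EuclideanSpace.volume_preserving_symm_measurableEquiv_toLp (Fin (k+1))).measure_preimage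
      hT'meas.nullMeasurableSet
  -- Fubini: split off coordinate 0
  set W : Set (Fin k → ℝ) := {w | ∑ i, w i ^ 2 < 1} with hW
  have hWmeas : MeasurableSet W :=
    measurableSet_lt (Finset.measurable_sum _ fun i _ =>
      ((measurable_pi_apply i).pow_const 2)) measurable_const
  have hprodmeas : MeasurableSet (Set.Icc (-a) a ×ˢ W) := measurableSet_Icc.prod hWmeas
  have hP := MeasureTheory.measurePreserving_piFinSuccAbove
    (fun _ : Fin (k+1) => (volume : Measure ℝ)) 0
  have hT'pre : T' = (MeasurableEquiv.piFinSuccAbove (fun _ : Fin (k+1) => ℝ) 0) ⁻¹'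
      (Set.Icc (-a) a ×ˢ W) := by
    ext z
    simp only [hT', Set.mem_setOf_eq, Set.mem_preimage, Set.mem_prod, Set.mem_Icc,
      MeasurableEquiv.piFinSuccAbove_apply, hW, Fin.insertNthEquiv_zero,
      Fin.consEquiv_symm_apply, Fin.tail]
    rw [abs_le]
  have step3 : volume T' = volume (Set.Icc (-a) a) * Measure.pi (fun _ : Fin k => volume) W := by
    rw [hT'pre, MeasureTheory.volume_pi,
      hP.measure_preimage hprodmeas.nullMeasurableSet, Measure.prod_prod]
  have hW' : Measure.pi (fun _ : Fin k => (volume : Measure ℝ)) W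
      = ENNReal.ofReal (Real.sqrt π ^ k / Real.Gamma ((k:ℝ)/2 + 1)) := by
    rw [← MeasureTheory.volume_pi]
    exact volume_pi_sumsq k
  calc volume T ≤ volume T' := step1.trans_eq step2
    _ = volume (Set.Icc (-a) a) * Measure.pi (fun _ : Fin k => volume) W := step3
    _ = ENNReal.ofReal (2*a) * ENNReal.ofReal (Real.sqrt π ^ k / Real.Gamma ((k:ℝ)/2 + 1)) := by
        rw [hW', Real.volume_Icc]
        have : a - -a = 2*a := by ring
        rw [this]

lemma exists_good_vector {d : ℕ} (hd : 1 ≤ d) {m : ℕ} (V : Fin m → EuclideanSpace ℝ (Fin d))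
    (hV : ∀ i, V i ≠ 0) {ε : ℝ} (hε : 0 < ε)
    (hm : (m : ℝ) * (2 * ε) * (Real.sqrt π ^ (d-1) / Real.Gamma (((d-1:ℕ):ℝ)/2 + 1))
      < Real.sqrt π ^ d / Real.Gamma ((d:ℝ)/2 + 1)) :
    ∃ u : EuclideanSpace ℝ (Fin d), ‖u‖ = 1 ∧ ∀ i, ε * ‖V i‖ ≤ |(inner ℝ u (V i) : ℝ)| := by
  haveI : NeZero d := ⟨by omega⟩
  rcases Nat.eq_zero_or_pos m with hm0 | hm0
  · subst hm0
    refine ⟨EuclideanSpace.single 0 1, by simp [EuclideanSpace.norm_single], fun i => i.elim0⟩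
  set Bk : ℝ := Real.sqrt π ^ (d-1) / Real.Gamma (((d-1:ℕ):ℝ)/2 + 1) with hBk
  have hBk0 : 0 ≤ Bk := by
    apply div_nonneg (by positivity)
    exact (Real.Gamma_pos_of_pos (by positivity)).le
  set Bd : ℝ := Real.sqrt π ^ d / Real.Gamma ((d:ℝ)/2 + 1) with hBd
  -- the bad sets
  set Bad : Fin m → Set (EuclideanSpace ℝ (Fin d)) := fun i =>
    {g | |(inner ℝ (‖V i‖⁻¹ • V i) g : ℝ)| ≤ ε ∧ ‖g‖ < 1} with hBad
  have hBadvol : ∀ i, volume (Bad i) ≤ ENNReal.ofReal (2*ε) * ENNReal.ofReal Bk := fun i =>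
    slab_volume hd _ (norm_smul_inv_norm (hV i)) ε hε.le
  -- volume of the ball
  have hball : volume (Metric.ball (0 : EuclideanSpace ℝ (Fin d)) 1) = ENNReal.ofReal Bd := by
    rw [EuclideanSpace.volume_ball, Fintype.card_fin]
    simp [ENNReal.ofReal_one, hBd]
  -- union bound
  have hUnion : volume (⋃ i, Bad i) < volume (Metric.ball (0 : EuclideanSpace ℝ (Fin d)) 1) := by
    calc volume (⋃ i, Bad i) ≤ ∑ i : Fin m, volume (Bad i) := measure_iUnion_fintype_le _ _
      _ ≤ ∑ _i : Fin m, ENNReal.ofReal (2*ε) * ENNReal.ofReal Bk :=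
          Finset.sum_le_sum fun i _ => hBadvol i
      _ = (m : ENNReal) * (ENNReal.ofReal (2*ε) * ENNReal.ofReal Bk) := by
          rw [Finset.sum_const, Finset.card_univ, Fintype.card_fin, nsmul_eq_mul]
      _ = ENNReal.ofReal ((m:ℝ) * (2*ε) * Bk) := by
          rw [← ENNReal.ofReal_natCast m, ← ENNReal.ofReal_mul (by positivity),
            ← ENNReal.ofReal_mul (by positivity)]
          ring_nf
      _ < ENNReal.ofReal Bd := by
          rw [ENNReal.ofReal_lt_ofReal_iff]
          · exact hm
          · calc (0:ℝ) ≤ (m:ℝ) * (2*ε) * Bk := by positivity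
              _ < Bd := hm
      _ = volume (Metric.ball (0 : EuclideanSpace ℝ (Fin d)) 1) := hball.symm
  -- find a good point
  have hnotsub : ¬ (Metric.ball (0 : EuclideanSpace ℝ (Fin d)) 1 ⊆ ⋃ i, Bad i) := by
    intro hsub
    exact absurd (measure_mono hsub) (not_le.mpr hUnion)
  obtain ⟨g, hgball, hgU⟩ := Set.not_subset.mp hnotsub
  have hgnorm : ‖g‖ < 1 := mem_ball_zero_iff.mp hgball
  have hgood : ∀ i, ε * ‖V i‖ < |(inner ℝ g (V i) : ℝ)| := by
    intro i
    have : g ∉ Bad i := fun h => hgU (Set.mem_iUnion.mpr ⟨i, h⟩)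
    rw [hBad] at this
    simp only [Set.mem_setOf_eq, not_and, not_le] at this
    have h2 : ε < |(inner ℝ (‖V i‖⁻¹ • V i) g : ℝ)| := by
      by_contra h
      exact (this (not_lt.mp h)) hgnorm
    have h3 : |(inner ℝ (‖V i‖⁻¹ • V i) g : ℝ)| = ‖V i‖⁻¹ * |(inner ℝ (V i) g : ℝ)| := by
      rw [real_inner_smul_left, abs_mul, abs_inv, abs_norm]
    rw [h3] at h2
    have hVpos : 0 < ‖V i‖ := norm_pos_iff.mpr (hV i)
    rw [real_inner_comm]
    calc ε * ‖V i‖ < (‖V i‖⁻¹ * |(inner ℝ (V i) g : ℝ)|) * ‖V i‖ :=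
        mul_lt_mul_of_pos_right h2 hVpos
      _ = |(inner ℝ (V i) g : ℝ)| := by field_simp
  have hg0 : g ≠ 0 := by
    intro h
    have := hgood ⟨0, hm0⟩
    rw [h] at this
    simp only [inner_zero_left, abs_zero] at this
    have hVpos : 0 < ‖V ⟨0, hm0⟩‖ := norm_pos_iff.mpr (hV _)
    nlinarith
  have hgpos : 0 < ‖g‖ := norm_pos_iff.mpr hg0
  refine ⟨‖g‖⁻¹ • g, norm_smul_inv_norm hg0, fun i => ?_⟩
  have hginv : 1 ≤ ‖g‖⁻¹ := (one_le_inv₀ hgpos).mpr hgnorm.le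
  have hi : (inner ℝ (‖g‖⁻¹ • g) (V i) : ℝ) = ‖g‖⁻¹ * (inner ℝ g (V i) : ℝ) :=
    real_inner_smul_left _ _ _
  rw [hi, abs_mul, abs_inv, abs_norm]
  calc ε * ‖V i‖ ≤ |(inner ℝ g (V i) : ℝ)| := (hgood i).le
    _ ≤ ‖g‖⁻¹ * |(inner ℝ g (V i) : ℝ)| := le_mul_of_one_le_left (abs_nonneg _) hginv

/-- for every `d ≥ 1` and every nonempty finite `𝒳 ⊂ ℝ^d` there is a unit
vector `u` such that for all `x, x' ∈ 𝒳`,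
`(1/|𝒳|²)·√(8/(πd))·‖x − x'‖ ≤ |⟪u, x − x'⟫| ≤ ‖x − x'‖`. -/
theorem exists_unit_vector_separating {d : ℕ} (hd : 1 ≤ d)
    (X : Finset (EuclideanSpace ℝ (Fin d))) (hX : X.Nonempty) :
    ∃ u : EuclideanSpace ℝ (Fin d), ‖u‖ = 1 ∧
      ∀ x ∈ X, ∀ x' ∈ X,
        (1 / (X.card : ℝ) ^ 2) * Real.sqrt (8 / (Real.pi * d)) * ‖x - x'‖ ≤
            |(inner ℝ u (x - x') : ℝ)| ∧
          |(inner ℝ u (x - x') : ℝ)| ≤ ‖x - x'‖ := by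
  classical
  set n := X.card with hn
  have hn1 : 0 < n := Finset.card_pos.mpr hX
  have hd0 : (0:ℝ) < d := by exact_mod_cast hd
  set ε : ℝ := 1 / (n:ℝ)^2 * Real.sqrt (8/(π*d)) with hε_def
  have hsq : 0 < Real.sqrt (8/(π*d)) := Real.sqrt_pos.mpr (by positivity)
  have hε : 0 < ε := by positivity
  -- enumerate X
  let eX : ↥X ≃ Fin n := Fintype.equivFinOfCardEq (Fintype.card_coe X)
  let f : Fin n → EuclideanSpace ℝ (Fin d) := fun i => ((eX.symm i : ↥X) : EuclideanSpace ℝ (Fin d))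
  have hfinj : Function.Injective f := fun i j h => by
    have := Subtype.coe_injective h
    exact eX.symm.injective this
  -- pairs
  set I : Finset (Fin n × Fin n) := Finset.univ.filter (fun p => p.1 < p.2) with hI
  set m := I.card with hm_def
  -- card bound
  have hswap : (I.image Prod.swap).card = I.card :=
    Finset.card_image_of_injective _ Prod.swap_injective
  have hdisj : Disjoint I (I.image Prod.swap) := by
    rw [Finset.disjoint_left]
    intro p hp hp2
    have h1 : p.1 < p.2 := (Finset.mem_filter.mp hp).2
    obtain ⟨q, hq1, hq2⟩ := Finset.mem_image.mp hp2
    have h2 : q.1 < q.2 := (Finset.mem_filter.mp hq1).2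
    rw [← hq2] at h1
    simp only [Prod.fst_swap, Prod.snd_swap] at h1
    exact absurd h1 (not_lt.mpr h2.le)
  have h2m : 2 * m ≤ n * n := by
    calc 2 * m = I.card + (I.image Prod.swap).card := by rw [hswap]; ring
      _ = (I ∪ I.image Prod.swap).card := (Finset.card_union_of_disjoint hdisj).symm
      _ ≤ Fintype.card (Fin n × Fin n) := Finset.card_le_univ _
      _ = n * n := by simp
  -- the difference vectors
  let eI : ↥I ≃ Fin m := Fintype.equivFinOfCardEq (Fintype.card_coe I)
  let V : Fin m → EuclideanSpace ℝ (Fin d) :=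
    fun j => f (eI.symm j).1.1 - f (eI.symm j).1.2
  have hV : ∀ j, V j ≠ 0 := by
    intro j
    have hmem := (eI.symm j).2
    have hlt : (eI.symm j).1.1 < (eI.symm j).1.2 := (Finset.mem_filter.mp hmem).2
    exact sub_ne_zero_of_ne (hfinj.ne hlt.ne)
  -- numeric condition
  have hnum : (m : ℝ) * (2 * ε) * (Real.sqrt π ^ (d-1) / Real.Gamma (((d-1:ℕ):ℝ)/2 + 1))
      < Real.sqrt π ^ d / Real.Gamma ((d:ℝ)/2 + 1) := by
    have hBk0 : 0 ≤ Real.sqrt π ^ (d-1) / Real.Gamma (((d-1:ℕ):ℝ)/2 + 1) := by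
      apply div_nonneg (by positivity)
      exact (Real.Gamma_pos_of_pos (by positivity)).le
    have hstep : (m : ℝ) * (2 * ε) ≤ Real.sqrt (8/(π*d)) := by
      have h2m' : (2 * m : ℝ) ≤ (n:ℝ) * n := by exact_mod_cast h2m
      have hn0 : (0:ℝ) < (n:ℝ)^2 := by positivity
      rw [hε_def]
      rw [show (m:ℝ) * (2 * (1 / (n:ℝ)^2 * Real.sqrt (8/(π*d))))
          = (2*m) / (n:ℝ)^2 * Real.sqrt (8/(π*d)) by ring]
      calc (2*(m:ℝ)) / (n:ℝ)^2 * Real.sqrt (8/(π*d))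
          ≤ 1 * Real.sqrt (8/(π*d)) := by
            apply mul_le_mul_of_nonneg_right _ hsq.le
            rw [div_le_one hn0]
            calc (2*(m:ℝ)) ≤ (n:ℝ)*n := h2m'
              _ = (n:ℝ)^2 := by ring
        _ = Real.sqrt (8/(π*d)) := one_mul _
    calc (m : ℝ) * (2 * ε) * (Real.sqrt π ^ (d-1) / Real.Gamma (((d-1:ℕ):ℝ)/2 + 1))
        ≤ Real.sqrt (8/(π*d)) * (Real.sqrt π ^ (d-1) / Real.Gamma (((d-1:ℕ):ℝ)/2 + 1)) :=
          mul_le_mul_of_nonneg_right hstep hBk0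
      _ < Real.sqrt π ^ d / Real.Gamma ((d:ℝ)/2 + 1) := key_ratio d hd
  obtain ⟨u, hu1, hu2⟩ := exists_good_vector hd V hV hε hnum
  refine ⟨u, hu1, fun x hx x' hx' => ?_⟩
  constructor
  · -- lower bound
    rcases eq_or_ne x x' with rfl | hne
    · simp
    · set i := eX ⟨x, hx⟩ with hi
      set j := eX ⟨x', hx'⟩ with hj
      have hfi : f i = x := by rw [hi]; simp only [f, Equiv.symm_apply_apply]
      have hfj : f j = x' := by rw [hj]; simp only [f, Equiv.symm_apply_apply]
      have hij : i ≠ j := by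
        intro h
        exact hne (congrArg Subtype.val (eX.injective h))
      have key : ∀ p : Fin n × Fin n, p ∈ I → f p.1 = x ∧ f p.2 = x' ∨ f p.1 = x' ∧ f p.2 = x →
          ε * ‖x - x'‖ ≤ |(inner ℝ u (x - x') : ℝ)| := by
        intro p hpI hp
        set k := eI ⟨p, hpI⟩ with hk
        have hVk : V k = f p.1 - f p.2 := by
          show f ((eI.symm k : ↥I) : Fin n × Fin n).1 - f ((eI.symm k : ↥I) : Fin n × Fin n).2
            = f p.1 - f p.2
          rw [hk, Equiv.symm_apply_apply]
        have := hu2 k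
        rw [hVk] at this
        rcases hp with ⟨ha, hb⟩ | ⟨ha, hb⟩
        · rwa [ha, hb] at this
        · rw [ha, hb] at this
          rw [(neg_sub x x').symm, inner_neg_right, abs_neg, norm_neg] at this
          exact this
      rcases lt_or_gt_of_ne hij with hlt | hgt
      · exact key (i, j) (Finset.mem_filter.mpr ⟨Finset.mem_univ _, hlt⟩) (Or.inl ⟨hfi, hfj⟩)
      · exact key (j, i) (Finset.mem_filter.mpr ⟨Finset.mem_univ _, hgt⟩) (Or.inr ⟨hfj, hfi⟩)
  · calc |(inner ℝ u (x - x') : ℝ)| ≤ ‖u‖ * ‖x - x'‖ := abs_real_inner_le_norm u _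
      _ = ‖x - x'‖ := by rw [hu1, one_mul]
end

section
/- Let 𝒱 ⊂ ℝ^d be a finite set such that 0 < γ_min < ‖v‖₂ < γ_max for all v ∈ 𝒱 and ‖v − v′‖₂ > ε for all distinct v, v′ ∈ 𝒱. Then for every δ > 0, every integer s ≥ 1, and every integer ρ with 1 ≤ ρ ≤ min(d, s), there exist matrices W_K, W_Q ∈ ℝ^{s×d} of rank ρ such that |(W_K v_a)^⊤(W_Q v_c) − (W_K v_b)^⊤(W_Q v_c)| > δ for all v_a, v_b, v_c ∈ 𝒱 with v_a ≠ v_b. -/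
/-- The Euclidean norm of a vector in `ℝ^d` (viewed as `Fin d → ℝ`). -/
noncomputable def euclNorm {d : ℕ} (v : Fin d → ℝ) : ℝ :=
  Real.sqrt (∑ i, v i ^ 2)

open Matrix in
/-- Given a finite family of nonzero vectors, there is a vector whose dot product with
each of them is nonzero. -/
lemma exists_dot_ne_zero {d : ℕ} (S : Finset (Fin d → ℝ)) (hS : ∀ w ∈ S, w ≠ 0) :
    ∃ u : Fin d → ℝ, ∀ w ∈ S, u ⬝ᵥ w ≠ 0 := by
  classical
  induction S using Finset.induction_on with
  | empty => exact ⟨0, by simp⟩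
  | @insert w S' hw ih =>
    obtain ⟨u, hu⟩ := ih (fun v hv => hS v (Finset.mem_insert_of_mem hv))
    have hww : w ⬝ᵥ w ≠ 0 := by
      rw [Ne, dotProduct_self_eq_zero]
      exact hS w (Finset.mem_insert_self _ _)
    obtain ⟨c, hc⟩ := Infinite.exists_notMem_finset
      ((insert w S').image fun v => -(u ⬝ᵥ v) / (w ⬝ᵥ v))
    refine ⟨u + c • w, fun v hv => ?_⟩
    have hexp : (u + c • w) ⬝ᵥ v = u ⬝ᵥ v + c * (w ⬝ᵥ v) := by
      rw [add_dotProduct, smul_dotProduct, smul_eq_mul]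
    rw [hexp]
    by_cases hwv : w ⬝ᵥ v = 0
    · rcases Finset.mem_insert.1 hv with rfl | hv'
      · exact absurd hwv hww
      · simpa [hwv] using hu v hv'
    · intro h0
      apply hc
      refine Finset.mem_image.2 ⟨v, hv, ?_⟩
      field_simp
      linarith

open Matrix

/-- given a finite vocabulary `𝒱 ⊂ ℝ^d` with `0 < γ_min < ‖v‖ < γ_max` and
pairwise separation `‖v − v'‖ > ε`, for every `δ > 0`, `s ≥ 1` and `1 ≤ ρ ≤ min(d, s)`
there exist rank-`ρ` matrices `W_K, W_Q ∈ ℝ^{s×d}` with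
`|(W_K v_a)ᵀ(W_Q v_c) − (W_K v_b)ᵀ(W_Q v_c)| > δ` for all `v_a ≠ v_b`, `v_c` in `𝒱`. -/
theorem exists_rank_rho_weights {d : ℕ} (V : Finset (Fin d → ℝ))
    (γmin γmax ε : ℝ) (hγmin : 0 < γmin) (hγ : γmin < γmax)
    (hnorm : ∀ v ∈ V, γmin < euclNorm v ∧ euclNorm v < γmax)
    (hsep : ∀ v ∈ V, ∀ v' ∈ V, v ≠ v' → euclNorm (v - v') > ε)
    (δ : ℝ) (hδ : 0 < δ) (s : ℕ) (hs : 1 ≤ s)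
    (ρ : ℕ) (hρ1 : 1 ≤ ρ) (hρ2 : ρ ≤ min d s) :
    ∃ WK WQ : Matrix (Fin s) (Fin d) ℝ, WK.rank = ρ ∧ WQ.rank = ρ ∧
      ∀ va ∈ V, ∀ vb ∈ V, ∀ vc ∈ V, va ≠ vb →
        |(∑ t, WK.mulVec va t * WQ.mulVec vc t) -
            (∑ t, WK.mulVec vb t * WQ.mulVec vc t)| > δ := by
  classical
  have hρd : ρ ≤ d := hρ2.trans (min_le_left _ _)
  have hρs : ρ ≤ s := hρ2.trans (min_le_right _ _)
  have hd : 0 < d := lt_of_lt_of_le hρ1 hρd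
  haveI : NeZero d := ⟨hd.ne'⟩
  haveI : NeZero ρ := ⟨by omega⟩
  haveI : NeZero s := ⟨by omega⟩
  -- all vectors in V are nonzero
  have hVne : ∀ v ∈ V, v ≠ 0 := by
    intro v hv h0
    have h1 := (hnorm v hv).1
    rw [h0] at h1
    simp [euclNorm] at h1
    linarith
  -- the finite set of vectors to separate from
  set e0 : Fin d → ℝ := Pi.single 0 1 with he0
  set S : Finset (Fin d → ℝ) :=
    insert e0 (V ∪ ((V ×ˢ V).filter (fun p => p.1 ≠ p.2)).image (fun p => p.1 - p.2)) with hS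
  obtain ⟨u, hu⟩ := exists_dot_ne_zero S (by
    intro w hw
    rcases Finset.mem_insert.1 hw with rfl | hw'
    · intro h
      have := congrFun h 0
      simp [he0] at this
    · rcases Finset.mem_union.1 hw' with h | h
      · exact hVne w h
      · obtain ⟨p, hp, rfl⟩ := Finset.mem_image.1 h
        exact sub_ne_zero.2 (Finset.mem_filter.1 hp).2)
  have huvc : ∀ v ∈ V, u ⬝ᵥ v ≠ 0 := fun v hv =>
    hu v (Finset.mem_insert_of_mem (Finset.mem_union_left _ hv))
  have hudiff : ∀ va ∈ V, ∀ vb ∈ V, va ≠ vb → u ⬝ᵥ va - u ⬝ᵥ vb ≠ 0 := by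
    intro va ha vb hb hab
    have := hu (va - vb) (Finset.mem_insert_of_mem (Finset.mem_union_right _
      (Finset.mem_image.2 ⟨(va, vb),
        Finset.mem_filter.2 ⟨Finset.mem_product.2 ⟨ha, hb⟩, hab⟩, rfl⟩)))
    rwa [dotProduct_sub] at this
  have hu0 : u 0 ≠ 0 := by
    have := hu e0 (Finset.mem_insert_self _ _)
    rwa [he0, dotProduct_single, mul_one] at this
  -- the matrices
  set g : ℝ → Fin ρ → (Fin d → ℝ) := fun t i =>
    if i = 0 then t • u else Pi.single (Fin.castLE hρd i) 1 with hg
  set r : ℝ → Fin s → (Fin d → ℝ) := fun t i =>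
    if h : (i : ℕ) < ρ then g t ⟨i, h⟩ else 0 with hr
  set W : ℝ → Matrix (Fin s) (Fin d) ℝ := fun t => Matrix.of (r t) with hW
  have hcast0 : ∀ i : Fin ρ, Fin.castLE hρd i = 0 → i = 0 := by
    intro i h
    have : (i : ℕ) = 0 := by simpa using congrArg Fin.val h
    exact Fin.ext this
  -- the rows at index 0
  have h2 : ∀ t : ℝ, r t 0 = t • u := by
    intro t
    have h0 : ((0 : Fin s) : ℕ) < ρ := by simp; omega
    have hz : (⟨((0 : Fin s) : ℕ), h0⟩ : Fin ρ) = 0 := Fin.ext (by simp)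
    simp only [hr, hg]
    rw [dif_pos h0, if_pos hz]
  have h3 : r 0 0 = (0 : Fin d → ℝ) := by rw [h2, zero_smul]
  have h1 : ∀ (t : ℝ) (i : Fin s), i ≠ 0 → r t i = r 0 i := by
    intro t i hi
    simp only [hr, hg]
    by_cases h : (i : ℕ) < ρ
    · rw [dif_pos h, dif_pos h]
      have hne : (⟨(i : ℕ), h⟩ : Fin ρ) ≠ 0 := by
        intro he
        apply hi
        have : (i : ℕ) = 0 := by simpa using congrArg Fin.val he
        exact Fin.ext (by simpa using this)
      rw [if_neg hne, if_neg hne]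
    · rw [dif_neg h, dif_neg h]
  -- rank computation
  have hrank : ∀ t : ℝ, t ≠ 0 → (W t).rank = ρ := by
    intro t ht
    have hgli : LinearIndependent ℝ (g t) := by
      rw [Fintype.linearIndependent_iff]
      intro c hc
      have e1 : ∀ i : Fin ρ, i ≠ 0 → g t i 0 = 0 := by
        intro i hi
        have hne : (0 : Fin d) ≠ Fin.castLE hρd i := fun h => hi (hcast0 i h.symm)
        simp only [hg]
        rw [if_neg hi, Pi.single_eq_of_ne hne]
      have hc0 : c 0 = 0 := by
        have hc0' := congrFun hc 0
        simp only [Finset.sum_apply, Pi.smul_apply, smul_eq_mul, Pi.zero_apply] at hc0'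
        rw [Finset.sum_eq_single (0 : Fin ρ)] at hc0'
        · have hg00 : g t 0 0 = t * u 0 := by
            rw [hg]; simp
          rw [hg00] at hc0'
          rcases mul_eq_zero.1 hc0' with h | h
          · exact h
          · exact absurd h (mul_ne_zero ht hu0)
        · intro i _ hi
          rw [e1 i hi, mul_zero]
        · intro h; exact absurd (Finset.mem_univ _) h
      intro i
      rcases eq_or_ne i 0 with rfl | hi
      · exact hc0
      have hci := congrFun hc (Fin.castLE hρd i)
      simp only [Finset.sum_apply, Pi.smul_apply, smul_eq_mul, Pi.zero_apply] at hci
      rw [Finset.sum_eq_single i] at hci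
      · have hgii : g t i (Fin.castLE hρd i) = 1 := by
          rw [hg]; simp [hi]
        rw [hgii, mul_one] at hci
        exact hci
      · intro i' _ hi'
        rcases eq_or_ne i' 0 with rfl | h0
        · rw [hc0, zero_mul]
        · have hz : g t i' (Fin.castLE hρd i) = 0 := by
            have hne : Fin.castLE hρd i ≠ Fin.castLE hρd i' :=
              fun h => hi' ((Fin.castLE_injective hρd) h).symm
            simp only [hg]
            rw [if_neg h0, Pi.single_eq_of_ne hne]
          rw [hz, mul_zero]
      · intro h; exact absurd (Finset.mem_univ _) h
    have hspan : Submodule.span ℝ (Set.range (W t)) = Submodule.span ℝ (Set.range (g t)) := by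
      apply le_antisymm
      · rw [Submodule.span_le]
        rintro x ⟨i, rfl⟩
        show r t i ∈ _
        simp only [hr]
        by_cases h : (i : ℕ) < ρ
        · rw [dif_pos h]
          exact Submodule.subset_span ⟨⟨i, h⟩, rfl⟩
        · rw [dif_neg h]
          exact Submodule.zero_mem _
      · rw [Submodule.span_le]
        rintro x ⟨i, rfl⟩
        have hlt : ((Fin.castLE hρs i : Fin s) : ℕ) < ρ := i.isLt
        have : g t i = W t (Fin.castLE hρs i) := by
          show g t i = r t (Fin.castLE hρs i)
          simp only [hr]
          rw [dif_pos hlt]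
          congr 1
        rw [this]
        exact Submodule.subset_span ⟨_, rfl⟩
    rw [Matrix.rank_eq_finrank_span_row, Matrix.row, hspan, finrank_span_eq_card hgli, Fintype.card_fin]
  -- the bilinear form
  set B : (Fin d → ℝ) → (Fin d → ℝ) → ℝ :=
    fun x y => ∑ i, (r 0 i ⬝ᵥ x) * (r 0 i ⬝ᵥ y) with hB
  have hD : ∀ (t : ℝ) (x y : Fin d → ℝ),
      (∑ i, (W t).mulVec x i * (W t).mulVec y i)
        = t ^ 2 * ((u ⬝ᵥ x) * (u ⬝ᵥ y)) + B x y := by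
    intro t x y
    have hmv : (∑ i, (W t).mulVec x i * (W t).mulVec y i)
        = ∑ i, (r t i ⬝ᵥ x) * (r t i ⬝ᵥ y) := rfl
    rw [hmv, hB]
    simp only []
    rw [← Finset.sum_erase_add Finset.univ _ (Finset.mem_univ (0 : Fin s)),
        ← Finset.sum_erase_add Finset.univ (fun i => (r 0 i ⬝ᵥ x) * (r 0 i ⬝ᵥ y))
          (Finset.mem_univ (0 : Fin s))]
    have e1 : (∑ i ∈ Finset.univ.erase (0 : Fin s), (r t i ⬝ᵥ x) * (r t i ⬝ᵥ y))
        = ∑ i ∈ Finset.univ.erase (0 : Fin s), (r 0 i ⬝ᵥ x) * (r 0 i ⬝ᵥ y) :=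
      Finset.sum_congr rfl fun i hi => by rw [h1 t i (Finset.ne_of_mem_erase hi)]
    have e2 : (r t 0 ⬝ᵥ x) * (r t 0 ⬝ᵥ y) = t ^ 2 * ((u ⬝ᵥ x) * (u ⬝ᵥ y)) := by
      rw [h2, smul_dotProduct, smul_dotProduct, smul_eq_mul, smul_eq_mul]
      ring
    have e3 : (r 0 0 ⬝ᵥ x) * (r 0 0 ⬝ᵥ y) = 0 := by
      rw [h3, zero_dotProduct, zero_mul]
    rw [e1, e2, e3, add_zero]
    ring
  -- choose t large enough
  have hev : ∀ p ∈ V ×ˢ V ×ˢ V, ∀ᶠ t : ℝ in Filter.atTop,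
      p.1 ≠ p.2.1 → |t ^ 2 * ((u ⬝ᵥ p.1 - u ⬝ᵥ p.2.1) * (u ⬝ᵥ p.2.2))
        + (B p.1 p.2.2 - B p.2.1 p.2.2)| > δ := by
    rintro ⟨va, vb, vc⟩ hp
    rcases eq_or_ne va vb with rfl | hab
    · exact Filter.Eventually.of_forall (fun t h => absurd rfl h)
    obtain ⟨ha, hbc⟩ := Finset.mem_product.1 hp
    obtain ⟨hb, hc⟩ := Finset.mem_product.1 hbc
    set α : ℝ := (u ⬝ᵥ va - u ⬝ᵥ vb) * (u ⬝ᵥ vc) with hα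
    set β : ℝ := B va vc - B vb vc with hβ
    have hα0 : α ≠ 0 := mul_ne_zero (hudiff va ha vb hb hab) (huvc vc hc)
    have hαpos : 0 < |α| := abs_pos.2 hα0
    refine Filter.eventually_atTop.2 ⟨max 1 ((δ + |β| + 1) / |α|), fun t ht _ => ?_⟩
    have ht1 : (1 : ℝ) ≤ t := le_trans (le_max_left _ _) ht
    have ht2 : (δ + |β| + 1) / |α| ≤ t := le_trans (le_max_right _ _) ht
    have h3 : δ + |β| + 1 ≤ t * |α| := (div_le_iff₀ hαpos).1 ht2
    have h4 : t ≤ t ^ 2 := by nlinarith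
    have h5 : |t ^ 2 * α| - |β| ≤ |t ^ 2 * α + β| := by
      calc |t ^ 2 * α| - |β| = |t ^ 2 * α| - |-β| := by rw [abs_neg]
        _ ≤ |t ^ 2 * α - -β| := abs_sub_abs_le_abs_sub _ _
        _ = |t ^ 2 * α + β| := by ring_nf
    have h6 : |t ^ 2 * α| = t ^ 2 * |α| := by
      rw [abs_mul, abs_of_nonneg (sq_nonneg t)]
    have h7 : t * |α| ≤ t ^ 2 * |α| := by nlinarith
    rw [h6] at h5
    linarith
  obtain ⟨t, ht1, htT⟩ :=
    ((Filter.eventually_ge_atTop (1 : ℝ)).and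
      ((Filter.eventually_all_finset (V ×ˢ V ×ˢ V)).2 hev)).exists
  have ht0 : t ≠ 0 := by intro h; rw [h] at ht1; linarith
  refine ⟨W t, W t, hrank t ht0, hrank t ht0, ?_⟩
  intro va ha vb hb vc hc hab
  have hp : (va, vb, vc) ∈ V ×ˢ V ×ˢ V :=
    Finset.mem_product.2 ⟨ha, Finset.mem_product.2 ⟨hb, hc⟩⟩
  have hkey := htT _ hp hab
  rw [hD t va vc, hD t vb vc]
  have heq : (t ^ 2 * ((u ⬝ᵥ va) * (u ⬝ᵥ vc)) + B va vc)
      - (t ^ 2 * ((u ⬝ᵥ vb) * (u ⬝ᵥ vc)) + B vb vc)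
      = t ^ 2 * ((u ⬝ᵥ va - u ⬝ᵥ vb) * (u ⬝ᵥ vc)) + (B va vc - B vb vc) := by ring
  rw [heq]
  exact hkey
end
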